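/- arXiv:1002.1933 — 11 statements merged into one kernel-verified Lean document; each statement's English description precedes it below -/
import Mathlib

section
/- The only affine permutation in S̃_n that avoids the pattern 132 is the identity. -/
theorem avoids_132_iff_id (n : ℕ) (hn : 2 ≤ n) (ω : ℤ → ℤ)
    (hbij : Function.Bijective ω)
    (hshift : ∀ i : ℤ, ω (i + n) = ω i + n)
    (hsum : ∑ i ∈ Finset.Icc (1 : ℤ) (n : ℤ), ω i = ((n + 1).choose 2 : ℤ)) :
    (¬ ∃ i₁ i₂ i₃ : ℤ, i₁ < i₂ ∧ i₂ < i₃ ∧ ω i₁ < ω i₃ ∧ ω i₃ < ω i₂) ↔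
      (∀ i : ℤ, ω i = i) := by
  constructor
  · intro havoid
    -- iterated shift
    have hmul : ∀ (k : ℕ) (i : ℤ), ω (i + k * n) = ω i + k * n := by
      intro k
      induction k with
      | zero => simp
      | succ k ih =>
        intro i
        have h1 := hshift (i + k * n)
        have h2 := ih i
        push_cast
        have h3 : (i + ((k : ℤ) + 1) * n) = (i + k * n) + n := by ring
        rw [h3, h1, h2]
        ring
    -- strict monotonicity
    have hmono : ∀ i j : ℤ, i < j → ω i < ω j := by
      intro i j hij
      by_contra h
      push_neg at h
      rcases lt_or_eq_of_le h with hlt | heq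
      · -- ω j < ω i : build a 132 pattern
        set M : ℕ := (ω i - ω j).toNat with hM
        have hMpos : (1 : ℤ) ≤ M := by
          have : (0 : ℤ) < ω i - ω j := by omega
          omega
        apply havoid
        refine ⟨i - M * n, i, j, ?_, hij, ?_, hlt⟩
        · have hn' : (2 : ℤ) ≤ n := by exact_mod_cast hn
          nlinarith
        · have := hmul M (i - M * n)
          have hval : ω (i - M * n) = ω i - M * n := by
            have h' : (i - M * n) + M * n = i := by ring
            rw [h'] at this
            omega
          rw [hval]
          have hMval : (M : ℤ) = ω i - ω j := by
            rw [hM]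
            have : (0 : ℤ) < ω i - ω j := by omega
            omega
          have hn' : (2 : ℤ) ≤ n := by exact_mod_cast hn
          nlinarith
      · exact absurd (hbij.1 heq.symm) (by omega)
    -- each step grows by at least 1
    have hstepge : ∀ (k : ℕ) (i : ℤ), ω i + k ≤ ω (i + k) := by
      intro k
      induction k with
      | zero => simp
      | succ k ih =>
        intro i
        have h1 := ih i
        have h2 : ω (i + k) < ω (i + k + 1) := hmono _ _ (by omega)
        have : i + ((k : ℤ) + 1) = i + k + 1 := by ring
        push_cast
        rw [this]
        omega
    -- each step is exactly 1
    have hstep : ∀ i : ℤ, ω (i + 1) = ω i + 1 := by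
      intro i
      have h1 : ω i + 1 ≤ ω (i + 1) := by
        have := hstepge 1 i
        push_cast at this
        omega
      have h2 : ω (i + 1) + ((n : ℤ) - 1) ≤ ω i + n := by
        have h3 := hstepge (n - 1) (i + 1)
        have hcast : ((n - 1 : ℕ) : ℤ) = (n : ℤ) - 1 := by
          have : 1 ≤ n := by omega
          omega
        rw [hcast] at h3
        have : i + 1 + ((n : ℤ) - 1) = i + n := by ring
        rw [this] at h3
        have := hshift i
        omega
      omega
    have hlin : ∀ i : ℤ, ω i = ω 0 + i := by
      intro i
      induction i using Int.induction_on with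
      | zero => simp
      | succ k ih =>
        have := hstep k
        push_cast at this ⊢
        omega
      | pred k ih =>
        have := hstep (-(k : ℤ) - 1)
        have h' : (-(k : ℤ) - 1) + 1 = -k := by ring
        rw [h'] at this
        push_cast at this ih ⊢
        omega
    -- sum formula
    have hsumform : ∀ m : ℕ,
        2 * ∑ i ∈ Finset.Icc (1 : ℤ) (m : ℤ), ω i = m * (m + 1) + 2 * m * ω 0 := by
      intro m
      induction m with
      | zero => simp
      | succ m ih =>
        have hins : Finset.Icc (1 : ℤ) ((m : ℤ) + 1) =
            insert ((m : ℤ) + 1) (Finset.Icc (1 : ℤ) (m : ℤ)) := by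
          ext x
          simp [Finset.mem_Icc, Finset.mem_insert]
          omega
        push_cast
        rw [hins, Finset.sum_insert (by simp)]
        rw [hlin ((m : ℤ) + 1)]
        push_cast at ih
        linear_combination ih
    have hchoose : 2 * ((n + 1).choose 2) = n * (n + 1) := by
      rw [Nat.choose_two_right]
      have h0 : n + 1 - 1 = n := Nat.succ_sub_one n
      rw [h0, Nat.mul_comm (n+1) n]
      rw [Nat.mul_div_cancel' (Nat.even_mul_succ_self n).two_dvd]
    have hc : ω 0 = 0 := by
      have h1 := hsumform n
      rw [hsum] at h1
      have h2 : ((2 * ((n + 1).choose 2) : ℕ) : ℤ) = (n : ℤ) * (n + 1) := by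
        rw [hchoose]; push_cast; ring
      push_cast at h2 h1
      have hn' : (2 : ℤ) ≤ n := by exact_mod_cast hn
      nlinarith [h1, h2]
    intro i
    rw [hlin i, hc]
    ring
  · intro h
    rintro ⟨i1, i2, i3, h12, h23, h13, h32⟩
    rw [h i1, h i2, h i3] at *
    omega
end

section
/- The only affine permutation in S̃_n that avoids the pattern 213 is the identity. -/
theorem avoids_213_iff_id (n : ℕ) (hn : 2 ≤ n) (ω : ℤ → ℤ)
    (hbij : Function.Bijective ω)
    (hshift : ∀ i : ℤ, ω (i + n) = ω i + n)
    (hsum : ∑ i ∈ Finset.Icc (1 : ℤ) (n : ℤ), ω i = ((n + 1).choose 2 : ℤ)) :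
    (¬ ∃ i₁ i₂ i₃ : ℤ, i₁ < i₂ ∧ i₂ < i₃ ∧ ω i₂ < ω i₁ ∧ ω i₁ < ω i₃) ↔
      (∀ i : ℤ, ω i = i) := by
  constructor
  · intro havoid
    have hshiftm : ∀ (m : ℕ) (i : ℤ), ω (i + m * n) = ω i + m * n := by
      intro m
      induction m with
      | zero => simp
      | succ k ih =>
        intro i
        have h1 : (i : ℤ) + ((k : ℕ) + 1 : ℕ) * n = (i + (k : ℕ) * n) + n := by
          push_cast; ring
        rw [h1, hshift, ih]
        push_cast; ring
    have hmono : ∀ i j : ℤ, i < j → ω i < ω j := by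
      intro i j hij
      by_contra h
      push_neg at h
      rcases lt_or_eq_of_le h with hlt | heq
      · set m : ℕ := (j - i).toNat + 1 with hm
        have hmge : (m : ℤ) ≥ j - i + 1 := by
          have := Int.toNat_of_nonneg (le_of_lt (sub_pos.mpr hij))
          push_cast [hm]
          omega
        have hmn : (m : ℤ) * n ≥ (m : ℤ) := by
          have h0 : (0 : ℤ) ≤ (m : ℤ) := by positivity
          have h1 : (1 : ℤ) ≤ (n : ℤ) := by exact_mod_cast Nat.one_le_of_lt hn
          nlinarith
        have hk : j < i + m * n := by omega
        have hωk : ω i < ω (i + m * n) := by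
          rw [hshiftm m i]
          have : (0 : ℤ) < (m : ℤ) * n := by omega
          omega
        exact havoid ⟨i, j, i + m * n, hij, hk, hlt, hωk⟩
      · exact absurd (hbij.1 heq.symm) (by omega)
    have hstep : ∀ i : ℤ, ω (i + 1) = ω i + 1 := by
      intro i
      obtain ⟨j, hj⟩ := hbij.2 (ω i + 1)
      have hji : i < j := by
        by_contra h
        push_neg at h
        rcases lt_or_eq_of_le h with h | h
        · have := hmono j i h; omega
        · subst h; omega
      have hj1 : j ≤ i + 1 := by
        by_contra h
        push_neg at h
        have h1 := hmono i (i + 1) (by omega)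
        have h2 := hmono (i + 1) j h
        omega
      have hje : j = i + 1 := by omega
      rw [← hje, hj]
    have hform : ∀ i : ℤ, ω i = i + ω 0 := by
      intro i
      induction i using Int.induction_on with
      | zero => simp
      | succ k ih => rw [hstep, ih]; ring
      | pred k ih =>
        have h := hstep (-(k : ℤ) - 1)
        have h2 : -(k : ℤ) - 1 + 1 = -(k : ℤ) := by ring
        rw [h2] at h
        linarith [ih]
    have hgauss : ∀ m : ℕ, ∑ i ∈ Finset.Icc (1 : ℤ) (m : ℤ), i = ((m + 1).choose 2 : ℤ) := by
      intro m
      induction m with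
      | zero => simp
      | succ k ih =>
        have h1 : ((k : ℕ) + 1 : ℕ) = ((k : ℤ) + 1 : ℤ) := by push_cast; ring
        have hins : Finset.Icc (1 : ℤ) ((k : ℤ) + 1) = insert ((k : ℤ) + 1) (Finset.Icc (1 : ℤ) (k : ℤ)) := by
          ext x; simp; omega
        have h2 : ∑ i ∈ Finset.Icc (1 : ℤ) ((k : ℤ) + 1), i
            = (∑ i ∈ Finset.Icc (1 : ℤ) (k : ℤ), i) + ((k : ℤ) + 1) := by
          rw [hins, Finset.sum_insert (by simp)]; ring
        rw [show (((k : ℕ) + 1 : ℕ) : ℤ) = (k : ℤ) + 1 by push_cast; ring, h2, ih]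
        rw [Nat.choose_succ_succ (k + 1) 1]
        push_cast [Nat.choose_one_right]
        ring
    -- now use hsum to show ω 0 = 0
    set c : ℤ := ω 0 with hc
    have hsum2 : ∑ i ∈ Finset.Icc (1 : ℤ) (n : ℤ), ω i
        = (∑ i ∈ Finset.Icc (1 : ℤ) (n : ℤ), i) + (n : ℤ) * c := by
      have : ∀ i ∈ Finset.Icc (1 : ℤ) (n : ℤ), ω i = i + c := fun i _ => hform i
      rw [Finset.sum_congr rfl this, Finset.sum_add_distrib, Finset.sum_const]
      congr 1
      rw [Int.card_Icc]
      simp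
    rw [hgauss n] at hsum2
    rw [hsum2] at hsum
    have hc0 : c = 0 := by
      have hn0 : (n : ℤ) ≠ 0 := by positivity
      have : (n : ℤ) * c = 0 := by omega
      exact (mul_eq_zero.mp this).resolve_left hn0
    intro i
    rw [hform i, hc0]
    ring
  · rintro hid ⟨i₁, i₂, i₃, h12, h23, h21, h13⟩
    rw [hid i₁, hid i₂] at h21
    omega
end

section
/- If ω ∈ S̃_n contains the pattern 231, then ω contains the pattern 1342. -/
theorem contains_231_imp_contains_1342 (n : ℕ) (hn : 2 ≤ n) (ω : ℤ → ℤ)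
    (hbij : Function.Bijective ω)
    (hshift : ∀ i : ℤ, ω (i + n) = ω i + n)
    (hsum : ∑ i ∈ Finset.Icc (1 : ℤ) (n : ℤ), ω i = ((n + 1).choose 2 : ℤ))
    (h231 : ∃ i₁ i₂ i₃ : ℤ, i₁ < i₂ ∧ i₂ < i₃ ∧ ω i₃ < ω i₁ ∧ ω i₁ < ω i₂) :
    ∃ i₁ i₂ i₃ i₄ : ℤ, i₁ < i₂ ∧ i₂ < i₃ ∧ i₃ < i₄ ∧
      ω i₁ < ω i₄ ∧ ω i₄ < ω i₂ ∧ ω i₂ < ω i₃ := by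
  obtain ⟨a, b, c, hab, hbc, hca, hab'⟩ := h231
  have key : ∀ (k : ℕ) (i : ℤ), ω (i - (k : ℤ) * n) = ω i - (k : ℤ) * n := by
    intro k
    induction k with
    | zero => simp
    | succ m ih =>
      intro i
      have h1 := hshift (i - ((m : ℤ) + 1) * n)
      have h2 : i - ((m : ℤ) + 1) * n + n = i - (m : ℤ) * n := by ring
      rw [h2] at h1
      have h3 := ih i
      push_cast
      linarith
  set k : ℕ := (b - a).toNat + (ω b - ω c).toNat + 1 with hk
  have hn1 : (1 : ℤ) ≤ (n : ℤ) := by exact_mod_cast Nat.one_le_of_lt hn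
  have hkpos : (1 : ℤ) ≤ (k : ℤ) := by exact_mod_cast Nat.one_le_iff_ne_zero.mpr (by omega)
  have hkn : (k : ℤ) ≤ (k : ℤ) * n := le_mul_of_one_le_right (by linarith) hn1
  have hk1 : b - a < (k : ℤ) := by
    have := Int.self_le_toNat (b - a)
    push_cast [hk]
    omega
  have hk2 : ω b - ω c < (k : ℤ) := by
    have := Int.self_le_toNat (ω b - ω c)
    push_cast [hk]
    omega
  refine ⟨b - (k : ℤ) * n, a, b, c, by linarith, hab, hbc, ?_, ?_, hab'⟩
  · rw [key k b]; linarith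
  · exact hca
end

section
/- An affine permutation ω ∈ S̃_n avoids the pattern 231 if and only if it avoids the pattern 1342. -/
theorem avoids_231_iff_avoids_1342 (n : ℕ) (hn : 2 ≤ n) (ω : ℤ → ℤ)
    (hbij : Function.Bijective ω)
    (hshift : ∀ i : ℤ, ω (i + n) = ω i + n)
    (hsum : ∑ i ∈ Finset.Icc (1 : ℤ) (n : ℤ), ω i = ((n + 1).choose 2 : ℤ)) :
    (¬ ∃ i₁ i₂ i₃ : ℤ, i₁ < i₂ ∧ i₂ < i₃ ∧ ω i₃ < ω i₁ ∧ ω i₁ < ω i₂) ↔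
      (¬ ∃ i₁ i₂ i₃ i₄ : ℤ, i₁ < i₂ ∧ i₂ < i₃ ∧ i₃ < i₄ ∧
        ω i₁ < ω i₄ ∧ ω i₄ < ω i₂ ∧ ω i₂ < ω i₃) := by
  have hshift' : ∀ (i : ℤ) (m : ℕ), ω (i - (m : ℤ) * n) = ω i - (m : ℤ) * n := by
    intro i m
    induction m with
    | zero => simp
    | succ m ih =>
      have h := hshift (i - ((m : ℤ) + 1) * n)
      have harg : i - ((m : ℤ) + 1) * n + n = i - (m : ℤ) * n := by ring
      rw [harg] at h
      push_cast
      push_cast at ih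
      linarith
  constructor
  · rintro h231 ⟨a, b, c, d, h1, h2, h3, h4, h5, h6⟩
    exact h231 ⟨b, c, d, h2, h3, h5, h6⟩
  · rintro h1342 ⟨a, b, c, h1, h2, h3, h4⟩
    set k : ℕ := (ω a - ω c).toNat with hk
    have hkpos : (1 : ℤ) ≤ (k : ℤ) := by
      rw [hk]
      rw [Int.toNat_of_nonneg (by linarith)]
      linarith
    have hkval : (k : ℤ) = ω a - ω c := by
      rw [hk, Int.toNat_of_nonneg (by linarith)]
    have hn2 : (2 : ℤ) ≤ (n : ℤ) := by exact_mod_cast hn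
    have hval := hshift' a k
    have hkn : (k : ℤ) < (k : ℤ) * n := by nlinarith
    refine h1342 ⟨a - (k : ℤ) * n, a, b, c, ?_, h1, h2, ?_, h3, h4⟩
    · nlinarith
    · rw [hval]; linarith
end

section
/- The number of affine permutations in S̃_n avoiding the pattern 312 equals binomial(2n-1, n). -/
namespace A312

open Finset

/-- The set of positions after `i` holding smaller values. -/
def codeSet (ω : ℤ → ℤ) (i : ℤ) : Set ℤ := {j : ℤ | i < j ∧ ω j < ω i}

noncomputable def code (ω : ℤ → ℤ) (i : ℤ) : ℕ := (codeSet ω i).ncard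

section basic

variable {n : ℕ} {ω : ℤ → ℤ}

lemma per_k (hper : ∀ i : ℤ, ω (i + n) = ω i + n) :
    ∀ (k : ℤ) (i : ℤ), ω (i + k * n) = ω i + k * n := by
  intro k
  induction k using Int.induction_on with
  | zero => simp
  | succ k ih =>
      intro i
      have : i + (k + 1 : ℤ) * n = (i + k * n) + n := by ring
      rw [this, hper, ih]; ring
  | pred k ih =>
      intro i
      have h1 : i + (-(k:ℤ) - 1) * n + (n:ℤ) = i + (-(k:ℤ)) * n := by ring
      have := hper (i + (-(k:ℤ) - 1) * n)
      rw [h1, ih] at this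
      omega

lemma per_k_nat {g : ℤ → ℕ} (hper : ∀ i : ℤ, g (i + n) = g i) :
    ∀ (k : ℤ) (i : ℤ), g (i + k * n) = g i := by
  intro k
  induction k using Int.induction_on with
  | zero => simp
  | succ k ih =>
      intro i
      have : i + (k + 1 : ℤ) * n = (i + k * n) + n := by ring
      rw [this, hper, ih]
  | pred k ih =>
      intro i
      have h1 : i + (-(k:ℤ) - 1) * n + (n:ℤ) = i + (-(k:ℤ)) * n := by ring
      have := hper (i + (-(k:ℤ) - 1) * n)
      rw [h1, ih] at this
      exact this.symm

lemma residue (hn : 2 ≤ n) (j : ℤ) :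
    ∃ r k : ℤ, r ∈ Finset.Icc (1:ℤ) (n:ℤ) ∧ j = r + k * n := by
  have hn0 : (0:ℤ) < (n:ℤ) := by exact_mod_cast Nat.lt_of_lt_of_le Nat.zero_lt_two hn
  refine ⟨(j - 1) % n + 1, (j - 1) / n, ?_, ?_⟩
  · have h1 : 0 ≤ (j - 1) % n := Int.emod_nonneg _ (by omega)
    have h2 : (j - 1) % n < n := Int.emod_lt_of_pos _ hn0
    simp only [Finset.mem_Icc]; omega
  · have h := Int.mul_ediv_add_emod (j - 1) (n:ℤ)
    rw [mul_comm]
    linarith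

lemma lower_bound (hn : 2 ≤ n) (hper : ∀ i : ℤ, ω (i + n) = ω i + n) :
    ∃ m : ℤ, ∀ j : ℤ, j + m ≤ ω j := by
  have hne : ((Finset.Icc (1:ℤ) (n:ℤ)).image (fun r => ω r - r)).Nonempty := by
    refine Finset.image_nonempty.2 ⟨1, ?_⟩
    simp only [Finset.mem_Icc]
    constructor
    · rfl
    · exact_mod_cast Nat.one_le_of_lt hn
  refine ⟨Finset.min' _ hne, fun j => ?_⟩
  obtain ⟨r, k, hr, rfl⟩ := residue hn j
  have h1 : ω (r + k * n) = ω r + k * n := per_k hper k r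
  have h2 : Finset.min' _ hne ≤ ω r - r :=
    Finset.min'_le _ _ (Finset.mem_image_of_mem _ hr)
  omega

lemma upper_bound (hn : 2 ≤ n) (hper : ∀ i : ℤ, ω (i + n) = ω i + n) :
    ∃ M : ℤ, ∀ j : ℤ, ω j ≤ j + M := by
  have hne : ((Finset.Icc (1:ℤ) (n:ℤ)).image (fun r => ω r - r)).Nonempty := by
    refine Finset.image_nonempty.2 ⟨1, ?_⟩
    simp only [Finset.mem_Icc]
    constructor
    · rfl
    · exact_mod_cast Nat.one_le_of_lt hn
  refine ⟨Finset.max' _ hne, fun j => ?_⟩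
  obtain ⟨r, k, hr, rfl⟩ := residue hn j
  have h1 : ω (r + k * n) = ω r + k * n := per_k hper k r
  have h2 : ω r - r ≤ Finset.max' _ hne :=
    Finset.le_max' _ _ (Finset.mem_image_of_mem (fun r => ω r - r) hr)
  omega

lemma codeSet_finite (hn : 2 ≤ n) (hper : ∀ i : ℤ, ω (i + n) = ω i + n) (i : ℤ) :
    (codeSet ω i).Finite := by
  obtain ⟨m, hm⟩ := lower_bound hn hper
  refine Set.Finite.subset (Set.finite_Ioo i (ω i - m)) ?_
  rintro j ⟨h1, h2⟩
  exact ⟨h1, by have := hm j; omega⟩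

lemma codeSet_shift (hper : ∀ i : ℤ, ω (i + n) = ω i + n) (i : ℤ) :
    codeSet ω (i + n) = (fun j => j + (n:ℤ)) '' codeSet ω i := by
  ext j
  simp only [codeSet, Set.mem_setOf_eq, Set.mem_image]
  constructor
  · rintro ⟨h1, h2⟩
    refine ⟨j - n, ⟨by omega, ?_⟩, by ring⟩
    have : ω (j - n + n) = ω (j - n) + n := hper _
    have hj : j - (n:ℤ) + n = j := by ring
    rw [hj] at this
    rw [hper i] at h2
    omega
  · rintro ⟨j₀, ⟨h1, h2⟩, rfl⟩
    refine ⟨by omega, ?_⟩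
    rw [hper j₀, hper i]
    omega

lemma code_shift (hper : ∀ i : ℤ, ω (i + n) = ω i + n) (i : ℤ) :
    code ω (i + n) = code ω i := by
  rw [code, codeSet_shift hper, Set.ncard_image_of_injective _ (add_left_injective _)]
  rfl

lemma code_per_k (hper : ∀ i : ℤ, ω (i + n) = ω i + n) :
    ∀ (k : ℤ) (i : ℤ), code ω (i + k * n) = code ω i := by
  intro k
  induction k using Int.induction_on with
  | zero => simp
  | succ k ih =>
      intro i
      have : i + (k + 1 : ℤ) * n = (i + k * n) + n := by ring
      rw [this, code_shift hper, ih]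
  | pred k ih =>
      intro i
      have h1 : i + (-(k:ℤ) - 1) * n + (n:ℤ) = i + (-(k:ℤ)) * n := by ring
      have := code_shift hper (i + (-(k:ℤ) - 1) * n)
      rw [h1, ih] at this
      exact this.symm

end basic

def Avoid (ω : ℤ → ℤ) : Prop :=
  ¬ ∃ i₁ i₂ i₃ : ℤ, i₁ < i₂ ∧ i₂ < i₃ ∧ ω i₂ < ω i₃ ∧ ω i₃ < ω i₁

section adj
variable {n : ℕ} {ω : ℤ → ℤ}

lemma descent_split (hn : 2 ≤ n) (hinj : Function.Injective ω)
    (hper : ∀ i : ℤ, ω (i + n) = ω i + n) {i : ℤ} (hd : ω (i+1) < ω i) :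
    code ω i = code ω (i+1) + 1
      + ({j : ℤ | i+1 < j ∧ ω (i+1) < ω j ∧ ω j < ω i}).ncard := by
  have hfin1 : (codeSet ω (i+1)).Finite := codeSet_finite hn hper (i+1)
  have hfinB : ({j : ℤ | i+1 < j ∧ ω (i+1) < ω j ∧ ω j < ω i}).Finite := by
    refine Set.Finite.subset (codeSet_finite hn hper i) ?_
    rintro j ⟨h1, _, h3⟩; exact ⟨by omega, h3⟩
  have hset : codeSet ω i
      = insert (i+1) (codeSet ω (i+1) ∪ {j : ℤ | i+1 < j ∧ ω (i+1) < ω j ∧ ω j < ω i}) := by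
    ext j
    simp only [codeSet, Set.mem_setOf_eq, Set.mem_insert_iff, Set.mem_union]
    constructor
    · rintro ⟨h1, h2⟩
      by_cases hj : j = i + 1
      · exact Or.inl hj
      · have hj1 : i + 1 < j := by omega
        have hne : ω j ≠ ω (i+1) := fun h => hj (hinj h)
        rcases lt_or_gt_of_ne hne with h | h
        · exact Or.inr (Or.inl ⟨hj1, h⟩)
        · exact Or.inr (Or.inr ⟨hj1, h, h2⟩)
    · rintro (rfl | ⟨h1, h2⟩ | ⟨h1, _, h3⟩)
      · exact ⟨by omega, hd⟩
      · exact ⟨by omega, by omega⟩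
      · exact ⟨by omega, h3⟩
  have hdisj : Disjoint (codeSet ω (i+1))
      {j : ℤ | i+1 < j ∧ ω (i+1) < ω j ∧ ω j < ω i} := by
    rw [Set.disjoint_left]
    rintro j ⟨_, h2⟩ ⟨_, h3, _⟩; omega
  have hnotmem : (i+1) ∉ codeSet ω (i+1) ∪ {j : ℤ | i+1 < j ∧ ω (i+1) < ω j ∧ ω j < ω i} := by
    rintro (⟨h, _⟩ | ⟨h, _⟩) <;> omega
  rw [code, code, hset,
    Set.ncard_insert_of_notMem hnotmem (hfin1.union hfinB),
    Set.ncard_union_eq hdisj hfin1 hfinB]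
  ring

lemma ascent_split (hn : 2 ≤ n) (hinj : Function.Injective ω)
    (hper : ∀ i : ℤ, ω (i + n) = ω i + n) {i : ℤ} (ha : ω i < ω (i+1)) :
    code ω (i+1) = code ω i
      + ({j : ℤ | i+1 < j ∧ ω i < ω j ∧ ω j < ω (i+1)}).ncard := by
  have hfin1 : (codeSet ω i).Finite := codeSet_finite hn hper i
  have hfinB : ({j : ℤ | i+1 < j ∧ ω i < ω j ∧ ω j < ω (i+1)}).Finite := by
    refine Set.Finite.subset (codeSet_finite hn hper (i+1)) ?_
    rintro j ⟨h1, _, h3⟩; exact ⟨h1, h3⟩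
  have hset : codeSet ω (i+1)
      = codeSet ω i ∪ {j : ℤ | i+1 < j ∧ ω i < ω j ∧ ω j < ω (i+1)} := by
    ext j
    simp only [codeSet, Set.mem_setOf_eq, Set.mem_union]
    constructor
    · rintro ⟨h1, h2⟩
      have hne : ω j ≠ ω i := fun h => (by omega : j ≠ i) (hinj h)
      rcases lt_or_gt_of_ne hne with h | h
      · exact Or.inl ⟨by omega, h⟩
      · exact Or.inr ⟨h1, h, h2⟩
    · rintro (⟨h1, h2⟩ | ⟨h1, _, h3⟩)
      · have hj : j ≠ i + 1 := by
          intro hj; rw [hj] at h2; omega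
        exact ⟨by omega, by omega⟩
      · exact ⟨by omega, h3⟩
  have hdisj : Disjoint (codeSet ω i)
      {j : ℤ | i+1 < j ∧ ω i < ω j ∧ ω j < ω (i+1)} := by
    rw [Set.disjoint_left]
    rintro j ⟨_, h2⟩ ⟨_, h3, _⟩; omega
  rw [code, code, hset, Set.ncard_union_eq hdisj hfin1 hfinB]

lemma descent_iff (hn : 2 ≤ n) (hinj : Function.Injective ω)
    (hper : ∀ i : ℤ, ω (i + n) = ω i + n) (i : ℤ) :
    ω (i+1) < ω i ↔ code ω (i+1) < code ω i := by
  constructor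
  · intro hd
    have := descent_split hn hinj hper hd
    omega
  · intro hc
    by_contra hnd
    have hne : ω (i+1) ≠ ω i := fun h => (by omega : i + 1 ≠ i) (hinj h)
    have ha : ω i < ω (i+1) := by omega
    have := ascent_split hn hinj hper ha
    omega

lemma avoid_code (hn : 2 ≤ n) (hinj : Function.Injective ω)
    (hper : ∀ i : ℤ, ω (i + n) = ω i + n) (hav : Avoid ω) (i : ℤ) :
    code ω i ≤ code ω (i+1) + 1 := by
  have hne : ω (i+1) ≠ ω i := fun h => (by omega : i + 1 ≠ i) (hinj h)
  rcases lt_or_gt_of_ne hne with hd | ha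
  · have hsplit := descent_split hn hinj hper hd
    have hB : ({j : ℤ | i+1 < j ∧ ω (i+1) < ω j ∧ ω j < ω i}) = ∅ := by
      ext j
      simp only [Set.mem_setOf_eq, Set.mem_empty_iff_false, iff_false]
      rintro ⟨h1, h2, h3⟩
      exact hav ⟨i, i+1, j, by omega, h1, h2, h3⟩
    rw [hB] at hsplit
    simp at hsplit
    omega
  · have := ascent_split hn hinj hper ha
    omega

lemma code_avoid (hn : 2 ≤ n) (hinj : Function.Injective ω)
    (hper : ∀ i : ℤ, ω (i + n) = ω i + n)
    (h : ∀ i : ℤ, code ω i ≤ code ω (i+1) + 1) : Avoid ω := by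
  rintro ⟨i1, i2, i3, h12, h23, hv23, hv31⟩
  set T : Finset ℤ := (Finset.Icc i1 (i2-1)).filter (fun t => ω i3 < ω t) with hT
  have hi1T : i1 ∈ T := by
    simp only [hT, Finset.mem_filter, Finset.mem_Icc]
    exact ⟨⟨le_refl _, by omega⟩, by omega⟩
  have hTne : T.Nonempty := ⟨i1, hi1T⟩
  set k := T.max' hTne with hk
  have hkT : k ∈ T := T.max'_mem hTne
  simp only [hT, Finset.mem_filter, Finset.mem_Icc] at hkT
  obtain ⟨⟨hk1, hk2⟩, hk3⟩ := hkT
  have hstep : ω (k+1) < ω i3 := by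
    by_cases hc : k + 1 = i2
    · rw [hc]; exact hv23
    · have hmem : k + 1 ∈ Finset.Icc i1 (i2-1) := by
        simp only [Finset.mem_Icc]; omega
      have : ¬ (ω i3 < ω (k+1)) := by
        intro hlt
        have : k + 1 ∈ T := by
          simp only [hT, Finset.mem_filter]; exact ⟨hmem, hlt⟩
        have := T.le_max' _ this
        omega
      have hne : ω (k+1) ≠ ω i3 := by
        intro h
        have : k + 1 = i3 := hinj h
        omega
      omega
  have hd : ω (k+1) < ω k := by omega
  have hsplit := descent_split hn hinj hper hd
  have hBpos : 0 < ({j : ℤ | k+1 < j ∧ ω (k+1) < ω j ∧ ω j < ω k}).ncard := by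
    have hfinB : ({j : ℤ | k+1 < j ∧ ω (k+1) < ω j ∧ ω j < ω k}).Finite := by
      refine Set.Finite.subset (codeSet_finite hn hper k) ?_
      rintro j ⟨h1, _, h3⟩; exact ⟨by omega, h3⟩
    rw [Set.ncard_pos hfinB]
    exact ⟨i3, by omega, hstep, by omega⟩
  have := h k
  omega

lemma exists_code_zero (hn : 2 ≤ n)
    (hper : ∀ i : ℤ, ω (i + n) = ω i + n) :
    ∃ i ∈ Finset.Icc (1:ℤ) (n:ℤ), code ω i = 0 := by
  have hne : (Finset.Icc (1:ℤ) (n:ℤ)).Nonempty := by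
    refine ⟨1, ?_⟩
    simp only [Finset.mem_Icc]
    exact ⟨le_refl _, by exact_mod_cast Nat.one_le_of_lt hn⟩
  obtain ⟨i, hi, hmin⟩ := Finset.exists_min_image _ ω hne
  refine ⟨i, hi, ?_⟩
  have : codeSet ω i = ∅ := by
    ext j
    simp only [codeSet, Set.mem_setOf_eq, Set.mem_empty_iff_false, iff_false]
    rintro ⟨h1, h2⟩
    obtain ⟨r, kk, hr, rfl⟩ := residue hn j
    have hωr : ω (r + kk * n) = ω r + kk * n := per_k hper kk r
    have hri : ω i ≤ ω r := hmin r hr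
    simp only [Finset.mem_Icc] at hi hr
    have hk0 : 0 ≤ kk := by
      by_contra hneg
      push_neg at hneg
      have : kk * (n:ℤ) ≤ -n := by
        have : kk ≤ -1 := by omega
        have h2n : (0:ℤ) < (n:ℤ) := by positivity
        nlinarith
      omega
    have : (0:ℤ) ≤ kk * n := by positivity
    omega
  rw [code, this, Set.ncard_empty]

end adj

/-! ### The adjacent transposition (periodic swap) -/

def swap (n : ℕ) (i₀ : ℤ) (j : ℤ) : ℤ :=
  if (n:ℤ) ∣ (j - i₀) then j + 1 else if (n:ℤ) ∣ (j - (i₀+1)) then j - 1 else j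

section swapsec
variable {n : ℕ} {i₀ : ℤ}

lemma not_dvd_one (hn : 2 ≤ n) : ¬ (n:ℤ) ∣ 1 := by
  intro h
  have := Int.le_of_dvd one_pos h
  omega

lemma dvd_small (hn : 2 ≤ n) {x : ℤ} (h : (n:ℤ) ∣ x) (h1 : -(n:ℤ) < x) (h2 : x < n) :
    x = 0 := by
  obtain ⟨c, rfl⟩ := h
  have hn0 : (0:ℤ) < (n:ℤ) := by positivity
  have hc1 : ¬ 1 ≤ c := fun hc => by nlinarith
  have hc2 : ¬ c ≤ -1 := fun hc => by nlinarith
  have : c = 0 := by omega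
  simp [this]

lemma swap_of_dvd₁ (hn : 2 ≤ n) {j : ℤ} (h : (n:ℤ) ∣ (j - i₀)) :
    swap n i₀ j = j + 1 := by
  rw [swap, if_pos h]

lemma swap_of_dvd₂ (hn : 2 ≤ n) {j : ℤ} (h : (n:ℤ) ∣ (j - (i₀+1))) :
    swap n i₀ j = j - 1 := by
  have h1 : ¬ (n:ℤ) ∣ (j - i₀) := by
    intro h2
    have heq : (1:ℤ) = (j - i₀) - (j - (i₀+1)) := by ring
    exact not_dvd_one hn (by rw [heq]; exact dvd_sub h2 h)
  rw [swap, if_neg h1, if_pos h]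

lemma swap_of_not_dvd (hn : 2 ≤ n) {j : ℤ} (h1 : ¬ (n:ℤ) ∣ (j - i₀))
    (h2 : ¬ (n:ℤ) ∣ (j - (i₀+1))) : swap n i₀ j = j := by
  rw [swap, if_neg h1, if_neg h2]

lemma swap_cases (hn : 2 ≤ n) (j : ℤ) :
    (swap n i₀ j = j + 1 ∧ (n:ℤ) ∣ (j - i₀)) ∨
    (swap n i₀ j = j - 1 ∧ (n:ℤ) ∣ (j - (i₀+1))) ∨
    (swap n i₀ j = j ∧ ¬ (n:ℤ) ∣ (j - i₀) ∧ ¬ (n:ℤ) ∣ (j - (i₀+1))) := by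
  by_cases h1 : (n:ℤ) ∣ (j - i₀)
  · exact Or.inl ⟨swap_of_dvd₁ hn h1, h1⟩
  · by_cases h2 : (n:ℤ) ∣ (j - (i₀+1))
    · exact Or.inr (Or.inl ⟨swap_of_dvd₂ hn h2, h2⟩)
    · exact Or.inr (Or.inr ⟨swap_of_not_dvd hn h1 h2, h1, h2⟩)

lemma swap_invol (hn : 2 ≤ n) (j : ℤ) : swap n i₀ (swap n i₀ j) = j := by
  rcases swap_cases (i₀ := i₀) hn j with ⟨he, hd⟩ | ⟨he, hd⟩ | ⟨he, hd1, hd2⟩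
  · have h2 : (n:ℤ) ∣ (j + 1 - (i₀ + 1)) := by
      have heq : j + 1 - (i₀ + 1) = j - i₀ := by ring
      rw [heq]; exact hd
    rw [he, swap_of_dvd₂ hn h2]
    ring
  · have h2 : (n:ℤ) ∣ (j - 1 - i₀) := by
      have heq : j - 1 - i₀ = j - (i₀ + 1) := by ring
      rw [heq]; exact hd
    rw [he, swap_of_dvd₁ hn h2]
    ring
  · rw [he, swap_of_not_dvd hn hd1 hd2]

lemma swap_bijective (hn : 2 ≤ n) : Function.Bijective (swap n i₀) :=
  Function.Involutive.bijective (swap_invol hn)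

lemma swap_add_n (hn : 2 ≤ n) (j : ℤ) : swap n i₀ (j + n) = swap n i₀ j + n := by
  have hdn : (n:ℤ) ∣ (n:ℤ) := dvd_refl _
  rcases swap_cases (i₀ := i₀) hn j with ⟨he, hd⟩ | ⟨he, hd⟩ | ⟨he, hd1, hd2⟩
  · have h2 : (n:ℤ) ∣ (j + n - i₀) := by
      have heq : j + (n:ℤ) - i₀ = (j - i₀) + n := by ring
      rw [heq]; exact dvd_add hd hdn
    rw [swap_of_dvd₁ hn h2, he]
    ring
  · have h1 : ¬ (n:ℤ) ∣ (j + n - i₀) := by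
      intro h
      have heq : j - i₀ = (j + n - i₀) - n := by ring
      have : (n:ℤ) ∣ (j - i₀) := by rw [heq]; exact dvd_sub h hdn
      have heq2 : (1:ℤ) = (j - i₀) - (j - (i₀+1)) := by ring
      exact not_dvd_one hn (by rw [heq2]; exact dvd_sub this hd)
    have h2 : (n:ℤ) ∣ (j + n - (i₀+1)) := by
      have heq : j + (n:ℤ) - (i₀+1) = (j - (i₀+1)) + n := by ring
      rw [heq]; exact dvd_add hd hdn
    rw [swap, if_neg h1, if_pos h2, he]
    ring
  · have h1 : ¬ (n:ℤ) ∣ (j + n - i₀) := by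
      intro h
      have heq : j - i₀ = (j + n - i₀) - n := by ring
      exact hd1 (by rw [heq]; exact dvd_sub h hdn)
    have h2 : ¬ (n:ℤ) ∣ (j + n - (i₀+1)) := by
      intro h
      have heq : j - (i₀+1) = (j + n - (i₀+1)) - n := by ring
      exact hd2 (by rw [heq]; exact dvd_sub h hdn)
    rw [swap_of_not_dvd hn h1 h2, he]

lemma swap_at (hn : 2 ≤ n) : swap n i₀ i₀ = i₀ + 1 := by
  rw [swap_of_dvd₁ hn (by simp)]

lemma swap_at1 (hn : 2 ≤ n) : swap n i₀ (i₀ + 1) = i₀ := by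
  rw [swap_of_dvd₂ hn (by simp)]
  ring

lemma swap_bounds (hn : 2 ≤ n) (j : ℤ) :
    j - 1 ≤ swap n i₀ j ∧ swap n i₀ j ≤ j + 1 := by
  rcases swap_cases (i₀ := i₀) hn j with ⟨he, _⟩ | ⟨he, _⟩ | ⟨he, _, _⟩ <;> rw [he] <;> omega

end swapsec

section swapcode
variable {n : ℕ} {i₀ : ℤ} {ω : ℤ → ℤ}

lemma image_codeSet_swap (hn : 2 ≤ n) (i : ℤ) :
    swap n i₀ '' codeSet (ω ∘ swap n i₀) i
      = {j : ℤ | i < swap n i₀ j ∧ ω j < ω (swap n i₀ i)} := by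
  ext j
  simp only [Set.mem_image, codeSet, Set.mem_setOf_eq, Function.comp_apply]
  constructor
  · rintro ⟨j', ⟨h1, h2⟩, rfl⟩
    rw [swap_invol hn j']
    exact ⟨h1, h2⟩
  · rintro ⟨h1, h2⟩
    refine ⟨swap n i₀ j, ⟨h1, ?_⟩, swap_invol hn j⟩
    rw [swap_invol hn j]
    exact h2

lemma swap_code_other (hn : 2 ≤ n) {i : ℤ} (hd1 : ¬ (n:ℤ) ∣ (i - i₀))
    (hd2 : ¬ (n:ℤ) ∣ (i - (i₀+1))) :
    code (ω ∘ swap n i₀) i = code ω i := by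
  have himg := image_codeSet_swap (ω := ω) (i₀ := i₀) hn i
  rw [swap_of_not_dvd hn hd1 hd2] at himg
  have hset : {j : ℤ | i < swap n i₀ j ∧ ω j < ω i} = codeSet ω i := by
    ext j
    simp only [Set.mem_setOf_eq, codeSet]
    have hb := swap_bounds (i₀ := i₀) hn j
    constructor
    · rintro ⟨h1, h2⟩
      refine ⟨?_, h2⟩
      rcases swap_cases (i₀ := i₀) hn j with ⟨he, hdv⟩ | ⟨he, hdv⟩ | ⟨he, _, _⟩
      · have hne : i ≠ j := by rintro rfl; exact hd1 hdv
        omega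
      · have hne : i ≠ j := by rintro rfl; exact hd2 hdv
        omega
      · omega
    · rintro ⟨h1, h2⟩
      refine ⟨?_, h2⟩
      rcases swap_cases (i₀ := i₀) hn j with ⟨he, hdv⟩ | ⟨he, hdv⟩ | ⟨he, _, _⟩
      · omega
      · have hne : i ≠ j - 1 := by
          rintro rfl
          apply hd1
          have heq : j - 1 - i₀ = j - (i₀+1) := by ring
          rw [heq]; exact hdv
        omega
      · omega
  rw [code, code, ← Set.ncard_image_of_injective (codeSet (ω ∘ swap n i₀) i)
      (swap_bijective hn).injective, himg, hset]

lemma swap_code_at (hn : 2 ≤ n) (hd : ω (i₀+1) < ω i₀) :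
    code (ω ∘ swap n i₀) i₀ = code ω (i₀+1) := by
  have hn2 : (2:ℤ) ≤ (n:ℤ) := by exact_mod_cast hn
  have himg := image_codeSet_swap (ω := ω) (i₀ := i₀) hn i₀
  rw [swap_at hn] at himg
  have hset : {j : ℤ | i₀ < swap n i₀ j ∧ ω j < ω (i₀+1)} = codeSet ω (i₀+1) := by
    ext j
    simp only [Set.mem_setOf_eq, codeSet]
    have hb := swap_bounds (i₀ := i₀) hn j
    constructor
    · rintro ⟨h1, h2⟩
      refine ⟨?_, h2⟩
      rcases swap_cases (i₀ := i₀) hn j with ⟨he, hdv⟩ | ⟨he, hdv⟩ | ⟨he, hv1, hv2⟩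
      · have hne : j ≠ i₀ := by rintro rfl; omega
        have hpos : 0 < j - i₀ := by omega
        have := Int.le_of_dvd hpos hdv
        omega
      · omega
      · have hne : j ≠ i₀ + 1 := by rintro rfl; exact hv2 (by simp)
        have hne2 : j ≠ i₀ := by rintro rfl; exact hv1 (by simp)
        omega
    · rintro ⟨h1, h2⟩
      exact ⟨by omega, h2⟩
  rw [code, code, ← Set.ncard_image_of_injective (codeSet (ω ∘ swap n i₀) i₀)
      (swap_bijective hn).injective, himg, hset]

lemma swap_code_at1 (hn : 2 ≤ n) (hper : ∀ i : ℤ, ω (i + n) = ω i + n)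
    (hd : ω (i₀+1) < ω i₀) :
    code ω i₀ = code (ω ∘ swap n i₀) (i₀+1) + 1 := by
  have hn2 : (2:ℤ) ≤ (n:ℤ) := by exact_mod_cast hn
  have himg := image_codeSet_swap (ω := ω) (i₀ := i₀) hn (i₀+1)
  rw [swap_at1 hn] at himg
  have hset : codeSet ω i₀ = insert (i₀+1) {j : ℤ | i₀+1 < swap n i₀ j ∧ ω j < ω i₀} := by
    ext j
    simp only [codeSet, Set.mem_setOf_eq, Set.mem_insert_iff]
    have hb := swap_bounds (i₀ := i₀) hn j
    constructor
    · rintro ⟨h1, h2⟩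
      by_cases hj : j = i₀ + 1
      · exact Or.inl hj
      · refine Or.inr ⟨?_, h2⟩
        rcases swap_cases (i₀ := i₀) hn j with ⟨he, hdv⟩ | ⟨he, hdv⟩ | ⟨he, hv1, hv2⟩
        · have hne : j ≠ i₀ := by rintro rfl; omega
          have hpos : 0 < j - i₀ := by omega
          have := Int.le_of_dvd hpos hdv
          omega
        · have hpos : 0 < j - (i₀+1) := by omega
          have := Int.le_of_dvd hpos hdv
          omega
        · omega
    · rintro (rfl | ⟨h1, h2⟩)
      · exact ⟨by omega, hd⟩
      · exact ⟨by omega, h2⟩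
  have hfinB : {j : ℤ | i₀+1 < swap n i₀ j ∧ ω j < ω i₀}.Finite := by
    refine Set.Finite.subset (codeSet_finite hn hper i₀) ?_
    rintro j ⟨h1, h2⟩
    have hb := swap_bounds (i₀ := i₀) hn j
    exact ⟨by omega, h2⟩
  have hnm : (i₀+1) ∉ {j : ℤ | i₀+1 < swap n i₀ j ∧ ω j < ω i₀} := by
    rintro ⟨h1, _⟩
    rw [swap_at1 hn] at h1
    omega
  rw [code, hset, Set.ncard_insert_of_notMem hnm hfinB]
  congr 1
  rw [code, ← Set.ncard_image_of_injective (codeSet (ω ∘ swap n i₀) (i₀+1))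
      (swap_bijective hn).injective, himg]

end swapcode

def IsAff (n : ℕ) (ω : ℤ → ℤ) : Prop :=
  Function.Bijective ω ∧ (∀ i : ℤ, ω (i + n) = ω i + n) ∧
    (∑ i ∈ Finset.Icc (1:ℤ) (n:ℤ), ω i = ((n+1).choose 2 : ℤ))

section sums
variable {n : ℕ} {i₀ : ℤ} {ω : ℤ → ℤ}

lemma Icc_eq_Ioc (n : ℕ) : Finset.Icc (1:ℤ) (n:ℤ) = Finset.Ioc (0:ℤ) ((0:ℤ)+n) := by
  ext j
  simp only [Finset.mem_Icc, Finset.mem_Ioc]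
  omega

lemma sum_shift_step (hn : 2 ≤ n) (f : ℤ → ℤ) (hper : ∀ i : ℤ, f (i + n) = f i + n) (a : ℤ) :
    ∑ j ∈ Finset.Ioc (a+1) (a+1+n), f j = (∑ j ∈ Finset.Ioc a (a+n), f j) + n := by
  have hn1 : (1:ℤ) ≤ (n:ℤ) := by exact_mod_cast Nat.one_le_of_lt hn
  have h1 : Finset.Ioc a (a+(n:ℤ)) = insert (a+1) (Finset.Ioc (a+1) (a+n)) := by
    ext j
    simp only [Finset.mem_Ioc, Finset.mem_insert]
    omega
  have h2 : Finset.Ioc (a+1) (a+1+(n:ℤ)) = insert (a+1+n) (Finset.Ioc (a+1) (a+n)) := by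
    ext j
    simp only [Finset.mem_Ioc, Finset.mem_insert]
    omega
  have hm1 : (a+1) ∉ Finset.Ioc (a+1) (a+(n:ℤ)) := by simp
  have hm2 : (a+1+(n:ℤ)) ∉ Finset.Ioc (a+1) (a+(n:ℤ)) := by simp
  rw [h1, h2, Finset.sum_insert hm1, Finset.sum_insert hm2]
  have : f (a+1+(n:ℤ)) = f (a+1) + n := hper (a+1)
  omega

lemma sum_window (hn : 2 ≤ n) (f : ℤ → ℤ) (hper : ∀ i : ℤ, f (i + n) = f i + n) :
    ∀ a : ℤ, ∑ j ∈ Finset.Ioc a (a+(n:ℤ)), f j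
      = (∑ j ∈ Finset.Ioc (0:ℤ) ((0:ℤ)+n), f j) + a * n := by
  intro a
  induction a using Int.induction_on with
  | zero => simp
  | succ k ih =>
      have hs := sum_shift_step hn f hper (k:ℤ)
      have hgoal : ((k:ℤ)+1) * n = (k:ℤ)*n + n := by ring
      linarith [hs, ih, hgoal]
  | pred k ih =>
      have hs := sum_shift_step hn f hper (-(k:ℤ)-1)
      rw [show (-(k:ℤ)-1+1) = (-(k:ℤ)) from by ring] at hs
      have hgoal : (-(k:ℤ)-1) * n = (-(k:ℤ))*n - n := by ring
      linarith [hs, ih, hgoal]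

lemma sum_shift_step_nat (hn : 2 ≤ n) (g : ℤ → ℕ) (hper : ∀ i : ℤ, g (i + n) = g i) (a : ℤ) :
    ∑ j ∈ Finset.Ioc (a+1) (a+1+(n:ℤ)), g j = ∑ j ∈ Finset.Ioc a (a+(n:ℤ)), g j := by
  have hn1 : (1:ℤ) ≤ (n:ℤ) := by exact_mod_cast Nat.one_le_of_lt hn
  have h1 : Finset.Ioc a (a+(n:ℤ)) = insert (a+1) (Finset.Ioc (a+1) (a+n)) := by
    ext j
    simp only [Finset.mem_Ioc, Finset.mem_insert]
    omega
  have h2 : Finset.Ioc (a+1) (a+1+(n:ℤ)) = insert (a+1+n) (Finset.Ioc (a+1) (a+n)) := by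
    ext j
    simp only [Finset.mem_Ioc, Finset.mem_insert]
    omega
  have hm1 : (a+1) ∉ Finset.Ioc (a+1) (a+(n:ℤ)) := by simp
  have hm2 : (a+1+(n:ℤ)) ∉ Finset.Ioc (a+1) (a+(n:ℤ)) := by simp
  rw [h1, h2, Finset.sum_insert hm1, Finset.sum_insert hm2]
  have : g (a+1+(n:ℤ)) = g (a+1) := hper (a+1)
  omega

lemma sum_window_nat (hn : 2 ≤ n) (g : ℤ → ℕ) (hper : ∀ i : ℤ, g (i + n) = g i) :
    ∀ a : ℤ, ∑ j ∈ Finset.Ioc a (a+(n:ℤ)), g j = ∑ j ∈ Finset.Ioc (0:ℤ) ((0:ℤ)+n), g j := by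
  intro a
  induction a using Int.induction_on with
  | zero => simp
  | succ k ih =>
      have hs := sum_shift_step_nat hn g hper (k:ℤ)
      rw [hs]
      exact ih
  | pred k ih =>
      have hs := sum_shift_step_nat hn g hper (-(k:ℤ)-1)
      rw [show (-(k:ℤ)-1+1) = (-(k:ℤ)) from by ring] at hs
      rw [← hs]
      exact ih

lemma swap_mapsTo (hn : 2 ≤ n) {j : ℤ} (hj : j ∈ Finset.Ioc (i₀-1) (i₀-1+(n:ℤ))) :
    swap n i₀ j ∈ Finset.Ioc (i₀-1) (i₀-1+(n:ℤ)) := by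
  have hn2 : (2:ℤ) ≤ (n:ℤ) := by exact_mod_cast hn
  simp only [Finset.mem_Ioc] at hj ⊢
  rcases swap_cases (i₀ := i₀) hn j with ⟨he, hdv⟩ | ⟨he, hdv⟩ | ⟨he, _, _⟩
  · have : j - i₀ = 0 := dvd_small hn hdv (by omega) (by omega)
    omega
  · have : j - (i₀+1) = 0 := dvd_small hn hdv (by omega) (by omega)
    omega
  · omega

lemma swap_sum_eq (hn : 2 ≤ n) (f : ℤ → ℤ) :
    ∑ j ∈ Finset.Ioc (i₀-1) (i₀-1+(n:ℤ)), f (swap n i₀ j)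
      = ∑ j ∈ Finset.Ioc (i₀-1) (i₀-1+(n:ℤ)), f j := by
  refine Finset.sum_equiv (Function.Involutive.toPerm _ (swap_invol (i₀ := i₀) hn : Function.Involutive (swap n i₀))) ?_ ?_
  · intro j
    change j ∈ Finset.Ioc (i₀-1) (i₀-1+(n:ℤ)) ↔ swap n i₀ j ∈ Finset.Ioc (i₀-1) (i₀-1+(n:ℤ))
    constructor
    · intro hj
      exact swap_mapsTo hn hj
    · intro hj
      have := swap_mapsTo hn hj
      rwa [swap_invol hn] at this
  · intro j _
    exact rfl

lemma isAff_swap (hn : 2 ≤ n) (h : IsAff n ω) (i₀ : ℤ) : IsAff n (ω ∘ swap n i₀) := by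
  obtain ⟨hbij, hper, hsum⟩ := h
  refine ⟨hbij.comp (swap_bijective hn), ?_, ?_⟩
  · intro i
    simp only [Function.comp_apply]
    rw [swap_add_n hn, hper]
  · have hper' : ∀ i : ℤ, (ω ∘ swap n i₀) (i + n) = (ω ∘ swap n i₀) i + n := by
      intro i
      simp only [Function.comp_apply]
      rw [swap_add_n hn, hper]
    have h1 := sum_window hn (ω ∘ swap n i₀) hper' (i₀ - 1)
    have h2 := sum_window hn ω hper (i₀ - 1)
    have h3 : ∑ j ∈ Finset.Ioc (i₀-1) (i₀-1+(n:ℤ)), (ω ∘ swap n i₀) j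
        = ∑ j ∈ Finset.Ioc (i₀-1) (i₀-1+(n:ℤ)), ω j := swap_sum_eq hn ω
    rw [Icc_eq_Ioc] at hsum ⊢
    omega

lemma not_dvd_of_window (hn : 2 ≤ n) {j : ℤ} (hlo : i₀ - 1 < j) (hhi : j ≤ i₀ - 1 + n)
    (h1 : j ≠ i₀) (h2 : j ≠ i₀ + 1) :
    ¬ (n:ℤ) ∣ (j - i₀) ∧ ¬ (n:ℤ) ∣ (j - (i₀+1)) := by
  have hn2 : (2:ℤ) ≤ (n:ℤ) := by exact_mod_cast hn
  constructor
  · intro hdv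
    have : j - i₀ = 0 := dvd_small hn hdv (by omega) (by omega)
    omega
  · intro hdv
    have : j - (i₀+1) = 0 := dvd_small hn hdv (by omega) (by omega)
    omega

lemma code_sum_swap (hn : 2 ≤ n) (hinj : Function.Injective ω)
    (hper : ∀ i : ℤ, ω (i + n) = ω i + n) (hd : ω (i₀+1) < ω i₀) :
    (∑ i ∈ Finset.Icc (1:ℤ) (n:ℤ), code (ω ∘ swap n i₀) i) + 1
      = ∑ i ∈ Finset.Icc (1:ℤ) (n:ℤ), code ω i := by
  have hn2 : (2:ℤ) ≤ (n:ℤ) := by exact_mod_cast hn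
  have hper' : ∀ i : ℤ, (ω ∘ swap n i₀) (i + n) = (ω ∘ swap n i₀) i + n := by
    intro i
    simp only [Function.comp_apply]
    rw [swap_add_n hn, hper]
  have hcper : ∀ i : ℤ, code ω (i + n) = code ω i := fun i => code_shift hper i
  have hcper' : ∀ i : ℤ, code (ω ∘ swap n i₀) (i + n) = code (ω ∘ swap n i₀) i :=
    fun i => code_shift hper' i
  rw [Icc_eq_Ioc, ← sum_window_nat hn (code ω) hcper (i₀ - 1),
    ← sum_window_nat hn (code (ω ∘ swap n i₀)) hcper' (i₀ - 1)]
  set I := Finset.Ioc (i₀-1) (i₀-1+(n:ℤ)) with hI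
  have hm0 : i₀ ∈ I := by simp only [hI, Finset.mem_Ioc]; omega
  have hm1 : (i₀+1) ∈ I.erase i₀ := by
    simp only [hI, Finset.mem_erase, Finset.mem_Ioc]
    constructor
    · omega
    · omega
  have split : ∀ g : ℤ → ℕ, ∑ j ∈ I, g j = g i₀ + (g (i₀+1) + ∑ j ∈ (I.erase i₀).erase (i₀+1), g j) := by
    intro g
    rw [Finset.add_sum_erase _ g hm1, Finset.add_sum_erase _ g hm0]
  rw [split (code ω), split (code (ω ∘ swap n i₀))]
  have hrest : ∑ j ∈ (I.erase i₀).erase (i₀+1), code (ω ∘ swap n i₀) j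
      = ∑ j ∈ (I.erase i₀).erase (i₀+1), code ω j := by
    refine Finset.sum_congr rfl ?_
    intro j hj
    simp only [Finset.mem_erase, hI, Finset.mem_Ioc] at hj
    obtain ⟨hne1, hne0, hlo, hhi⟩ := hj
    obtain ⟨hd1, hd2⟩ := not_dvd_of_window hn hlo hhi hne0 hne1
    exact swap_code_other hn hd1 hd2
  rw [hrest, swap_code_at hn hd, swap_code_at1 hn hper hd]
  omega

lemma gauss_sum (n : ℕ) : (∑ i ∈ Finset.Icc (1:ℤ) (n:ℤ), i) = ((n+1).choose 2 : ℤ) := by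
  induction n with
  | zero => simp
  | succ m ih =>
      have h1 : Finset.Icc (1:ℤ) ((m+1:ℕ):ℤ) = insert ((m:ℤ)+1) (Finset.Icc (1:ℤ) (m:ℤ)) := by
        ext j
        simp only [Finset.mem_Icc, Finset.mem_insert]
        push_cast
        omega
      have h2 : ((m:ℤ)+1) ∉ Finset.Icc (1:ℤ) (m:ℤ) := by
        simp only [Finset.mem_Icc]
        omega
      rw [h1, Finset.sum_insert h2, ih]
      have h3 : (m+1+1).choose 2 = (m+1).choose 1 + (m+1).choose 2 := Nat.choose_succ_succ' (m+1) 1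
      rw [h3]
      push_cast [Nat.choose_one_right]
      ring

lemma no_descent_eq_id (hn : 2 ≤ n) (hbij : Function.Bijective ω)
    (hper : ∀ i : ℤ, ω (i + n) = ω i + n)
    (hsum : ∑ i ∈ Finset.Icc (1:ℤ) (n:ℤ), ω i = ((n+1).choose 2 : ℤ))
    (hnd : ∀ i : ℤ, ¬ ω (i+1) < ω i) : ω = fun i => i := by
  have ha : ∀ i : ℤ, ω i < ω (i+1) := by
    intro i
    have hne : ω (i+1) ≠ ω i := fun h => (by omega : i + 1 ≠ i) (hbij.injective h)
    have := hnd i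
    omega
  have hmono : ∀ (k : ℕ) (i : ℤ), ω i + k ≤ ω (i + k) := by
    intro k
    induction k with
    | zero => simp
    | succ m ih =>
        intro i
        have h1 := ih i
        have h2 := ha (i + m)
        push_cast at h1 ⊢
        have he2 : i + ((m:ℤ)+1) = i + (m:ℤ) + 1 := by ring
        rw [he2]
        omega
  have hstep : ∀ i : ℤ, ω (i+1) = ω i + 1 := by
    intro i
    have h1 := ha i
    have h2 := hmono (n-1) (i+1)
    have he : i + 1 + ((n-1 : ℕ):ℤ) = i + n := by
      have : (1:ℕ) ≤ n := by omega
      push_cast [Nat.cast_sub this]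
      ring
    rw [he, hper] at h2
    have hc : ((n-1 : ℕ):ℤ) = (n:ℤ) - 1 := by
      have : (1:ℕ) ≤ n := by omega
      push_cast [Nat.cast_sub this]
      ring
    rw [hc] at h2
    omega
  have hval : ∀ i : ℤ, ω i = i + ω 0 := by
    intro i
    induction i using Int.induction_on with
    | zero => simp
    | succ k ih => rw [hstep k, ih]; ring
    | pred k ih =>
        have := hstep (-(k:ℤ)-1)
        have he : (-(k:ℤ)-1+1) = (-(k:ℤ)) := by ring
        rw [he] at this
        rw [this] at ih
        omega
  have hs0 : ∑ i ∈ Finset.Icc (1:ℤ) (n:ℤ), ω i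
      = (∑ i ∈ Finset.Icc (1:ℤ) (n:ℤ), i) + n * ω 0 := by
    rw [Finset.sum_congr rfl (fun i _ => hval i), Finset.sum_add_distrib]
    congr 1
    rw [Finset.sum_const]
    have hcard : (Finset.Icc (1:ℤ) (n:ℤ)).card = n := by
      rw [Int.card_Icc]
      simp
    rw [hcard]
    push_cast
    ring
  rw [gauss_sum n] at hs0
  have hω0 : ω 0 = 0 := by
    rw [hsum] at hs0
    have hn0 : (n:ℤ) ≠ 0 := by positivity
    have : (n:ℤ) * ω 0 = 0 := by omega
    exact (mul_eq_zero.1 this).resolve_left hn0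
  funext i
  rw [hval i, hω0]
  ring

end sums

section mainind
variable {n : ℕ}

lemma code_inj (hn : 2 ≤ n) (L : ℕ) : ∀ ω ω' : ℤ → ℤ, IsAff n ω → IsAff n ω' →
    (∀ i : ℤ, code ω i = code ω' i) →
    (∑ i ∈ Finset.Icc (1:ℤ) (n:ℤ), code ω i = L) → ω = ω' := by
  induction L using Nat.strong_induction_on with
  | _ L IH =>
  intro ω ω' hA hA' hcode hsum
  by_cases hdes : ∃ i : ℤ, code ω (i+1) < code ω i
  · obtain ⟨i, hi⟩ := hdes
    obtain ⟨i₀, k, hr, hieq⟩ := residue hn i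
    have h1 : code ω (i₀ + k*n) = code ω i₀ := code_per_k hA.2.1 k i₀
    have h1' : code ω (i₀ + k*n + 1) = code ω (i₀+1) := by
      have he : i₀ + k*n + 1 = (i₀+1) + k*n := by ring
      rw [he]
      exact code_per_k hA.2.1 k (i₀+1)
    rw [hieq] at hi
    rw [h1, h1'] at hi
    have hd : ω (i₀+1) < ω i₀ := (descent_iff hn hA.1.injective hA.2.1 i₀).2 hi
    have hd' : ω' (i₀+1) < ω' i₀ := by
      refine (descent_iff hn hA'.1.injective hA'.2.1 i₀).2 ?_
      rw [← hcode, ← hcode]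
      exact hi
    have hA2 := isAff_swap hn hA i₀
    have hA2' := isAff_swap hn hA' i₀
    have hcode2 : ∀ i : ℤ, code (ω ∘ swap n i₀) i = code (ω' ∘ swap n i₀) i := by
      intro i
      by_cases hc1 : (n:ℤ) ∣ (i - i₀)
      · obtain ⟨k', hk'⟩ := hc1
        have hieq2 : i = i₀ + k' * n := by linear_combination hk'
        rw [hieq2, code_per_k hA2.2.1 k' i₀, code_per_k hA2'.2.1 k' i₀,
          swap_code_at hn hd, swap_code_at hn hd', hcode]
      · by_cases hc2 : (n:ℤ) ∣ (i - (i₀+1))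
        · obtain ⟨k', hk'⟩ := hc2
          have hieq2 : i = (i₀+1) + k' * n := by linear_combination hk'
          rw [hieq2, code_per_k hA2.2.1 k' (i₀+1), code_per_k hA2'.2.1 k' (i₀+1)]
          have e1 := swap_code_at1 hn hA.2.1 hd
          have e2 := swap_code_at1 hn hA'.2.1 hd'
          have e3 := hcode i₀
          omega
        · rw [swap_code_other hn hc1 hc2, swap_code_other hn hc1 hc2, hcode]
    have hsum2 : (∑ j ∈ Finset.Icc (1:ℤ) (n:ℤ), code (ω ∘ swap n i₀) j) + 1 = L := by
      rw [code_sum_swap hn hA.1.injective hA.2.1 hd]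
      exact hsum
    have heq := IH (L - 1) (by omega) (ω ∘ swap n i₀) (ω' ∘ swap n i₀) hA2 hA2'
      hcode2 (by omega)
    funext j
    have : (ω ∘ swap n i₀) (swap n i₀ j) = (ω' ∘ swap n i₀) (swap n i₀ j) := by rw [heq]
    simpa [Function.comp_apply, swap_invol hn j] using this
  · push_neg at hdes
    have hnd : ∀ i : ℤ, ¬ ω (i+1) < ω i := by
      intro i h
      exact absurd ((descent_iff hn hA.1.injective hA.2.1 i).1 h) (by have := hdes i; omega)
    have hnd' : ∀ i : ℤ, ¬ ω' (i+1) < ω' i := by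
      intro i h
      have := (descent_iff hn hA'.1.injective hA'.2.1 i).1 h
      rw [← hcode, ← hcode] at this
      exact absurd this (by have := hdes i; omega)
    rw [no_descent_eq_id hn hA.1 hA.2.1 hA.2.2 hnd,
      no_descent_eq_id hn hA'.1 hA'.2.1 hA'.2.2 hnd']


lemma code_id (i : ℤ) : code (fun j : ℤ => j) i = 0 := by
  have h : codeSet (fun j : ℤ => j) i = ∅ := by
    ext j
    simp only [codeSet, Set.mem_setOf_eq, Set.mem_empty_iff_false, iff_false]
    omega
  rw [code, h, Set.ncard_empty]

lemma isAff_id (n : ℕ) : IsAff n (fun j : ℤ => j) :=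
  ⟨Function.bijective_id, fun _ => rfl, gauss_sum n⟩

lemma exists_max_drop (hn : 2 ≤ n) {v : ℤ → ℕ} (hper : ∀ i : ℤ, v (i + n) = v i)
    (hdes : ∃ i : ℤ, v (i+1) < v i) :
    ∃ i₀ : ℤ, (∀ j : ℤ, v j ≤ v i₀) ∧ v (i₀+1) < v i₀ := by
  obtain ⟨p0, hp0⟩ := hdes
  have hn1 : (1:ℤ) ≤ (n:ℤ) := by exact_mod_cast Nat.one_le_of_lt hn
  have hne : ((Finset.Icc (1:ℤ) (n:ℤ)).image v).Nonempty := by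
    refine Finset.image_nonempty.2 ⟨1, ?_⟩
    simp only [Finset.mem_Icc]
    omega
  set M := Finset.max' _ hne with hM
  have hall : ∀ j : ℤ, v j ≤ M := by
    intro j
    obtain ⟨r, k, hr, rfl⟩ := residue hn j
    rw [per_k_nat hper k r]
    exact Finset.le_max' _ _ (Finset.mem_image_of_mem v hr)
  obtain ⟨p, hp, hpv⟩ := Finset.mem_image.1 (Finset.max'_mem _ hne)
  by_contra hcon
  push_neg at hcon
  have hprop : ∀ t : ℕ, v (p + t) = M := by
    intro t
    induction t with
    | zero => simpa using hpv
    | succ m ih =>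
        have hmax : ∀ j, v j ≤ v (p + m) := by rw [ih]; exact hall
        have h1 := hcon (p + m) hmax
        have h2 := hall (p + m + 1)
        push_cast
        have he : p + ((m:ℤ)+1) = p + (m:ℤ) + 1 := by ring
        rw [he]
        omega
  have hallM : ∀ j : ℤ, v j = M := by
    intro j
    have hn0 : (0:ℤ) < (n:ℤ) := by omega
    have h1 : 0 ≤ (j - p) % n := Int.emod_nonneg _ (by omega)
    have hdiv := Int.mul_ediv_add_emod (j - p) (n:ℤ)
    have he : j = (p + (j-p) % n) + ((j-p)/n) * n := by linear_combination (-1 : ℤ) * hdiv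
    rw [he, per_k_nat hper _ _]
    obtain ⟨t, ht⟩ : ∃ t : ℕ, ((j - p) % (n:ℤ)) = (t:ℤ) :=
      ⟨((j-p) % (n:ℤ)).toNat, (Int.toNat_of_nonneg h1).symm⟩
    rw [ht]
    exact hprop t
  rw [hallM (p0+1), hallM p0] at hp0
  omega

lemma code_surj (hn : 2 ≤ n) (L : ℕ) : ∀ v : ℤ → ℕ,
    (∀ i : ℤ, v (i + n) = v i) → (∀ i : ℤ, v i ≤ v (i+1) + 1) →
    (∃ z : ℤ, v z = 0) → (∑ i ∈ Finset.Icc (1:ℤ) (n:ℤ), v i = L) →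
    ∃ ω : ℤ → ℤ, IsAff n ω ∧ (∀ i : ℤ, code ω i = v i) := by
  induction L using Nat.strong_induction_on with
  | _ L IH =>
  intro v hvper hvdrop hvzero hvsum
  have hn2 : (2:ℤ) ≤ (n:ℤ) := by exact_mod_cast hn
  by_cases hdes : ∃ i : ℤ, v (i+1) < v i
  · obtain ⟨i₀, hmax, hdrop⟩ := exists_max_drop hn hvper hdes
    have hstep : v i₀ = v (i₀+1) + 1 := by have := hvdrop i₀; omega
    set v' : ℤ → ℕ := fun i => if (n:ℤ) ∣ (i - i₀) then v i - 1 else v i with hv'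
    have hvcong : ∀ i : ℤ, (n:ℤ) ∣ (i - i₀) → v i = v i₀ := by
      rintro i ⟨k, hk⟩
      have heq : i = i₀ + k * n := by linear_combination hk
      rw [heq]
      exact per_k_nat hvper k i₀
    have hadj1 : ¬ (n:ℤ) ∣ ((i₀+1) - i₀) := by
      have heq : (i₀+1) - i₀ = 1 := by ring
      rw [heq]
      exact not_dvd_one hn
    have hv'per : ∀ i : ℤ, v' (i + n) = v' i := by
      intro i
      by_cases hc : (n:ℤ) ∣ (i - i₀)
      · have hc2 : (n:ℤ) ∣ (i + n - i₀) := by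
          have heq : i + (n:ℤ) - i₀ = (i - i₀) + n := by ring
          rw [heq]; exact dvd_add hc (dvd_refl _)
        simp only [hv', if_pos hc, if_pos hc2, hvper i]
      · have hc2 : ¬ (n:ℤ) ∣ (i + n - i₀) := by
          intro h
          apply hc
          have heq : i - i₀ = (i + n - i₀) - n := by ring
          rw [heq]; exact dvd_sub h (dvd_refl _)
        simp only [hv', if_neg hc, if_neg hc2, hvper i]
    have hadj : ∀ i : ℤ, (n:ℤ) ∣ (i - i₀) → ¬ (n:ℤ) ∣ (i + 1 - i₀) := by
      intro i h1 h2
      have heq : (1:ℤ) = (i + 1 - i₀) - (i - i₀) := by ring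
      exact not_dvd_one hn (by rw [heq]; exact dvd_sub h2 h1)
    have hv'drop : ∀ i : ℤ, v' i ≤ v' (i+1) + 1 := by
      intro i
      by_cases hc : (n:ℤ) ∣ (i - i₀)
      · have hc2 := hadj i hc
        simp only [hv', if_pos hc, if_neg hc2]
        have := hvdrop i
        omega
      · by_cases hc2 : (n:ℤ) ∣ (i + 1 - i₀)
        · simp only [hv', if_neg hc, if_pos hc2]
          have h1 : v (i+1) = v i₀ := hvcong _ hc2
          have h2 := hmax i
          omega
        · simp only [hv', if_neg hc, if_neg hc2]
          exact hvdrop i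
    have hv'zero : ∃ z : ℤ, v' z = 0 := by
      obtain ⟨z, hz⟩ := hvzero
      refine ⟨z, ?_⟩
      have hcz : ¬ (n:ℤ) ∣ (z - i₀) := by
        intro h
        have := hvcong z h
        omega
      simp only [hv', if_neg hcz]
      exact hz
    have hv'i₀ : v' i₀ = v i₀ - 1 := by
      simp only [hv']
      rw [if_pos (by simp)]
    have hv'i₀1 : v' (i₀+1) = v (i₀+1) := by
      simp only [hv']
      rw [if_neg hadj1]
    have hv'sum : (∑ i ∈ Finset.Icc (1:ℤ) (n:ℤ), v' i) + 1 = L := by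
      rw [← hvsum]
      rw [Icc_eq_Ioc, ← sum_window_nat hn v hvper (i₀-1), ← sum_window_nat hn v' hv'per (i₀-1)]
      have hm0 : i₀ ∈ Finset.Ioc (i₀-1) (i₀-1+(n:ℤ)) := by
        simp only [Finset.mem_Ioc]
        omega
      rw [← Finset.add_sum_erase _ v hm0, ← Finset.add_sum_erase _ v' hm0]
      have hrest : ∑ j ∈ (Finset.Ioc (i₀-1) (i₀-1+(n:ℤ))).erase i₀, v' j
          = ∑ j ∈ (Finset.Ioc (i₀-1) (i₀-1+(n:ℤ))).erase i₀, v j := by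
        refine Finset.sum_congr rfl ?_
        intro j hj
        simp only [Finset.mem_erase, Finset.mem_Ioc] at hj
        obtain ⟨hne0, hlo, hhi⟩ := hj
        have hcj : ¬ (n:ℤ) ∣ (j - i₀) := by
          intro h
          have : j - i₀ = 0 := dvd_small hn h (by omega) (by omega)
          omega
        simp only [hv', if_neg hcj]
      rw [hrest, hv'i₀]
      omega
    obtain ⟨ω', hA', hc'⟩ := IH (L-1) (by omega) v' hv'per hv'drop hv'zero (by omega)
    have hnd : ¬ ω' (i₀+1) < ω' i₀ := by
      intro h
      have hdlt := (descent_iff hn hA'.1.injective hA'.2.1 i₀).1 h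
      rw [hc', hc'] at hdlt
      omega
    have hasc : ω' i₀ < ω' (i₀+1) := by
      have hne : ω' (i₀+1) ≠ ω' i₀ := fun h => (by omega : i₀+1 ≠ i₀) (hA'.1.injective h)
      omega
    refine ⟨ω' ∘ swap n i₀, isAff_swap hn hA' i₀, ?_⟩
    set ω := ω' ∘ swap n i₀ with hω
    have hAf : IsAff n ω := isAff_swap hn hA' i₀
    have hcomp : ω ∘ swap n i₀ = ω' := by
      funext j
      simp only [hω, Function.comp_apply, swap_invol hn j]
    have hdesc : ω (i₀+1) < ω i₀ := by
      have e1 : ω (i₀+1) = ω' i₀ := by simp only [hω, Function.comp_apply, swap_at1 hn]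
      have e2 : ω i₀ = ω' (i₀+1) := by simp only [hω, Function.comp_apply, swap_at hn]
      omega
    intro i
    by_cases hc1 : (n:ℤ) ∣ (i - i₀)
    · obtain ⟨k', hk'⟩ := hc1
      have hieq : i = i₀ + k' * n := by linear_combination hk'
      rw [hieq, code_per_k hAf.2.1 k' i₀]
      have e1 := swap_code_at1 hn hAf.2.1 hdesc
      rw [hcomp] at e1
      rw [e1, hc']
      have e3 : v (i₀ + k' * n) = v i₀ := per_k_nat hvper k' i₀
      omega
    · by_cases hc2 : (n:ℤ) ∣ (i - (i₀+1))
      · obtain ⟨k', hk'⟩ := hc2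
        have hieq : i = (i₀+1) + k' * n := by linear_combination hk'
        rw [hieq, code_per_k hAf.2.1 k' (i₀+1)]
        have e1 := swap_code_at hn hdesc
        rw [hcomp] at e1
        rw [← e1, hc']
        have e3 : v ((i₀+1) + k' * n) = v (i₀+1) := per_k_nat hvper k' (i₀+1)
        omega
      · have e1 := swap_code_other (ω := ω) hn hc1 hc2
        rw [hcomp] at e1
        rw [← e1, hc']
        simp only [hv', if_neg hc1]
  · push_neg at hdes
    have hmono : ∀ (t : ℕ) (i : ℤ), v i ≤ v (i + t) := by
      intro t
      induction t with
      | zero => simp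
      | succ m ih =>
          intro i
          have h1 := ih i
          have h2 := hdes (i + m)
          push_cast
          have he : i + ((m:ℤ)+1) = i + (m:ℤ) + 1 := by ring
          rw [he]
          omega
    have hconst : ∀ i : ℤ, v (i+1) = v i := by
      intro i
      have h1 := hdes i
      have h2 := hmono (n-1) (i+1)
      have he : i + 1 + ((n-1 : ℕ):ℤ) = i + (n:ℤ) := by
        have h3 : (1:ℕ) ≤ n := by omega
        push_cast [Nat.cast_sub h3]
        ring
      rw [he, hvper] at h2
      omega
    have hv0 : ∀ i : ℤ, v i = v 0 := by
      intro i
      induction i using Int.induction_on with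
      | zero => rfl
      | succ k ih => rw [hconst (k:ℤ)]; exact ih
      | pred k ih =>
          have h := hconst (-(k:ℤ)-1)
          rw [show (-(k:ℤ)-1+1) = (-(k:ℤ)) from by ring] at h
          omega
    have hzero : ∀ i : ℤ, v i = 0 := by
      obtain ⟨z, hz⟩ := hvzero
      intro i
      have h1 := hv0 z
      have h2 := hv0 i
      omega
    refine ⟨fun j : ℤ => j, isAff_id n, fun i => ?_⟩
    rw [hzero i]
    exact code_id i

end mainind

section counting
variable {n : ℕ}

lemma card_V (hn : 2 ≤ n) :
    Nat.card {v : ℤ → ℕ // (∀ i : ℤ, v (i + (n:ℤ)) = v i) ∧ (∀ i : ℤ, v i ≤ v (i+1) + 1)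
        ∧ (∃ z : ℤ, v z = 0)}
      = Nat.card {P : Fin n → ℕ // ∑ i, P i = n} := by
  have hn0 : 0 < n := by omega
  have hnz : ((n:ℤ)) ≠ 0 := by positivity
  have hnp : (0:ℤ) < (n:ℤ) := by positivity
  -- the forward map
  have hsum_pf : ∀ (v : ℤ → ℕ), (∀ i : ℤ, v (i + (n:ℤ)) = v i) → (∀ i : ℤ, v i ≤ v (i+1) + 1) →
      ∑ k : Fin n, (v (((k:ℕ):ℤ) + 2) + 1 - v (((k:ℕ):ℤ) + 1)) = n := by
    intro v hvper hvdrop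
    have hcast : ∀ k : ℕ, ((v (((k:ℕ):ℤ) + 2) + 1 - v (((k:ℕ):ℤ) + 1) : ℕ) : ℤ)
        = (v ((k:ℤ) + 2) : ℤ) + 1 - (v ((k:ℤ) + 1) : ℤ) := by
      intro k
      have hb := hvdrop ((k:ℤ)+1)
      have he : (k:ℤ) + 1 + 1 = (k:ℤ) + 2 := by ring
      rw [he] at hb
      omega
    have h1 : ((∑ k : Fin n, (v (((k:ℕ):ℤ) + 2) + 1 - v (((k:ℕ):ℤ) + 1)) : ℕ) : ℤ) = (n:ℤ) := by
      push_cast [hcast]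
      rw [Fin.sum_univ_eq_sum_range (fun k : ℕ => ((v ((k:ℤ) + 2) : ℤ) + 1 - (v ((k:ℤ) + 1) : ℤ)))]
      have h2 : ∀ k ∈ Finset.range n, ((v ((k:ℤ) + 2) : ℤ) + 1 - (v ((k:ℤ) + 1) : ℤ))
          = ((v (((k+1:ℕ):ℤ) + 1) : ℤ) - (v (((k:ℕ):ℤ) + 1) : ℤ)) + 1 := by
        intro k _
        have he : ((k+1:ℕ):ℤ) + 1 = (k:ℤ) + 2 := by push_cast; ring
        rw [he]
        ring
      rw [Finset.sum_congr rfl h2, Finset.sum_add_distrib,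
        Finset.sum_range_sub (fun k : ℕ => (v ((k:ℤ) + 1) : ℤ))]
      have h3 : v (((n:ℕ):ℤ) + 1) = v 1 := by
        have := hvper 1
        have he : ((n:ℕ):ℤ) + 1 = 1 + (n:ℤ) := by ring
        rw [he, this]
      rw [h3]
      simp
    exact_mod_cast h1
  refine Nat.card_congr (Equiv.ofBijective
    (fun x => ⟨fun k => x.1 (((k:ℕ):ℤ) + 2) + 1 - x.1 (((k:ℕ):ℤ) + 1),
      hsum_pf x.1 x.2.1 x.2.2.1⟩) ⟨?_, ?_⟩)
  · -- injectivity
    rintro ⟨v, hvper, hvdrop, hvzero⟩ ⟨v', hv'per, hv'drop, hv'zero⟩ heq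
    have hd : ∀ k : Fin n, v (((k:ℕ):ℤ) + 2) + 1 - v (((k:ℕ):ℤ) + 1)
        = v' (((k:ℕ):ℤ) + 2) + 1 - v' (((k:ℕ):ℤ) + 1) := by
      intro k
      exact congrFun (congrArg Subtype.val heq) k
    have claim1 : ∀ t : ℕ, t ≤ n → v ((t:ℤ)+1) + v' 1 = v' ((t:ℤ)+1) + v 1 := by
      intro t
      induction t with
      | zero => intro _; simp only [Nat.cast_zero, zero_add]; omega
      | succ m ih =>
          intro hm
          have ihm := ih (by omega)
          have hdm := hd ⟨m, by omega⟩
          simp only [Fin.val_mk] at hdm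
          have hb1 := hvdrop ((m:ℤ)+1)
          have hb2 := hv'drop ((m:ℤ)+1)
          have he1 : (m:ℤ) + 1 + 1 = (m:ℤ) + 2 := by ring
          rw [he1] at hb1 hb2
          have he2 : ((m+1:ℕ):ℤ) + 1 = (m:ℤ) + 2 := by push_cast; ring
          rw [he2]
          omega
    have claim2 : ∀ i : ℤ, v i + v' 1 = v' i + v 1 := by
      intro i
      obtain ⟨r, k, hr, rfl⟩ := residue hn i
      rw [per_k_nat hvper k r, per_k_nat hv'per k r]
      simp only [Finset.mem_Icc] at hr
      obtain ⟨t, ht⟩ : ∃ t : ℕ, r - 1 = (t:ℤ) := ⟨(r-1).toNat, by omega⟩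
      have htn : t ≤ n := by omega
      have he : r = (t:ℤ) + 1 := by omega
      rw [he]
      exact claim1 t htn
    have h11 : v 1 = v' 1 := by
      obtain ⟨z, hz⟩ := hvzero
      obtain ⟨z', hz'⟩ := hv'zero
      have c1 := claim2 z
      have c2 := claim2 z'
      omega
    apply Subtype.ext
    funext i
    show v i = v' i
    have := claim2 i
    omega
  · -- surjectivity
    rintro ⟨d, hd⟩
    set dd : ℕ → ℕ := fun j => d ⟨j % n, Nat.mod_lt j hn0⟩ with hdd
    set w : ℕ → ℤ := fun k => ∑ j ∈ Finset.range k, ((dd j : ℤ) - 1) with hw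
    have hw0 : w 0 = 0 := by simp [hw]
    have hw_succ : ∀ k : ℕ, w (k+1) = w k + (dd k : ℤ) - 1 := by
      intro k
      simp only [hw, Finset.sum_range_succ]
      ring
    have hwn : w n = 0 := by
      have h1 : w n = (∑ j ∈ Finset.range n, (dd j : ℤ)) - n := by
        simp [hw, Finset.sum_sub_distrib]
      have h2 : ∑ j ∈ Finset.range n, (dd j : ℤ) = (n:ℤ) := by
        rw [← Fin.sum_univ_eq_sum_range (fun j : ℕ => (dd j : ℤ)) n]
        have h3 : ∀ i : Fin n, ((dd (i:ℕ) : ℕ) : ℤ) = ((d i : ℕ) : ℤ) := by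
          intro i
          have h4 : (i:ℕ) % n = (i:ℕ) := Nat.mod_eq_of_lt i.isLt
          simp only [hdd]
          congr 1
          exact congrArg d (Fin.ext h4)
        rw [Finset.sum_congr rfl (fun i _ => h3 i), ← Nat.cast_sum, hd]
      rw [h1, h2]
      ring
    have hmne : ((Finset.range n).image w).Nonempty :=
      Finset.image_nonempty.2 ⟨0, Finset.mem_range.2 hn0⟩
    set m := Finset.min' _ hmne with hm
    have hm_le : ∀ k : ℕ, k < n → m ≤ w k := fun k hk =>
      Finset.min'_le _ _ (Finset.mem_image_of_mem w (Finset.mem_range.2 hk))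
    obtain ⟨k₀, hk₀r, hk₀⟩ : ∃ k₀ ∈ Finset.range n, w k₀ = m := by
      obtain ⟨k₀, hk₀r, hk₀⟩ := Finset.mem_image.1 (Finset.min'_mem _ hmne)
      exact ⟨k₀, hk₀r, hk₀⟩
    set v : ℤ → ℕ := fun i => (w ((i - 1) % (n:ℤ)).toNat - m).toNat with hv
    have hridx : ∀ i : ℤ, 0 ≤ (i - 1) % (n:ℤ) ∧ (i - 1) % (n:ℤ) < (n:ℤ) :=
      fun i => ⟨Int.emod_nonneg _ hnz, Int.emod_lt_of_pos _ hnp⟩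
    have hrlt : ∀ i : ℤ, ((i - 1) % (n:ℤ)).toNat < n := by
      intro i
      have := hridx i
      omega
    have hval : ∀ i : ℤ, (v i : ℤ) = w (((i-1) % (n:ℤ)).toNat) - m := by
      intro i
      have h1 := hm_le (((i-1) % (n:ℤ)).toNat) (hrlt i)
      simp only [hv]
      omega
    have hper : ∀ i : ℤ, v (i + (n:ℤ)) = v i := by
      intro i
      simp only [hv]
      have he : i + (n:ℤ) - 1 = (i - 1) + (n:ℤ) * 1 := by ring
      rw [he, Int.add_mul_emod_self_left]
    have hstep : ∀ i : ℤ, w (((i + 1 - 1) % (n:ℤ)).toNat)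
        = w (((i-1) % (n:ℤ)).toNat) + (dd (((i-1) % (n:ℤ)).toNat) : ℤ) - 1 := by
      intro i
      set r := ((i-1) % (n:ℤ)).toNat with hrdef
      have hrn : r < n := hrlt i
      have hrc : ((r:ℕ):ℤ) = (i-1) % (n:ℤ) := by
        have := hridx i
        omega
      have h1 : (i + 1 - 1) % (n:ℤ) = ((i-1) % (n:ℤ) + 1) % (n:ℤ) := by
        have he2 : i + 1 - 1 = ((i-1) % (n:ℤ) + 1) + (n:ℤ) * ((i-1) / (n:ℤ)) := by
          have := Int.mul_ediv_add_emod (i-1) (n:ℤ)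
          linarith
        rw [he2, Int.add_mul_emod_self_left]
      by_cases hc : r + 1 < n
      · have h2 : ((i-1) % (n:ℤ) + 1) % (n:ℤ) = (i-1) % (n:ℤ) + 1 := by
          apply Int.emod_eq_of_lt (by omega)
          omega
        have h3 : (((i-1) % (n:ℤ) + 1)).toNat = r + 1 := by omega
        rw [h1, h2, h3, hw_succ r]
      · have hrn1 : r + 1 = n := by omega
        have h2 : ((i-1) % (n:ℤ) + 1) % (n:ℤ) = 0 := by
          have he3 : (i-1) % (n:ℤ) + 1 = (n:ℤ) := by omega
          rw [he3, Int.emod_self]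
        rw [h1, h2]
        have h4 := hw_succ r
        rw [hrn1] at h4
        simp only [Int.toNat_zero, hw0]
        omega
    have hstep' : ∀ i : ℤ, (v (i+1) : ℤ) = (v i : ℤ) + (dd (((i-1) % (n:ℤ)).toNat) : ℤ) - 1 := by
      intro i
      rw [hval (i+1), hval i, hstep i]
      ring
    have hdrop : ∀ i : ℤ, v i ≤ v (i+1) + 1 := by
      intro i
      have h1 := hstep' i
      have h4 : (0:ℤ) ≤ (dd (((i-1) % (n:ℤ)).toNat) : ℤ) := by positivity
      omega
    have hzero : ∃ z : ℤ, v z = 0 := by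
      refine ⟨(k₀ : ℤ) + 1, ?_⟩
      have h1 : ((k₀:ℤ) + 1 - 1) % (n:ℤ) = (k₀ : ℤ) := by
        have he : (k₀:ℤ) + 1 - 1 = (k₀:ℤ) := by ring
        rw [he]
        apply Int.emod_eq_of_lt (by positivity)
        exact_mod_cast Finset.mem_range.1 hk₀r
      simp only [hv, h1, Int.toNat_natCast, hk₀]
      simp
    refine ⟨⟨v, hper, hdrop, hzero⟩, ?_⟩
    apply Subtype.ext
    funext k
    -- goal: v (↑k+2) + 1 - v (↑k+1) = d k
    have hkn : (k:ℕ) < n := k.isLt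
    have e1 := hstep' (((k:ℕ):ℤ) + 1)
    have he : ((k:ℕ):ℤ) + 1 + 1 = ((k:ℕ):ℤ) + 2 := by ring
    rw [he] at e1
    have hidx : ((((k:ℕ):ℤ) + 1 - 1) % (n:ℤ)).toNat = (k:ℕ) := by
      have he2 : ((k:ℕ):ℤ) + 1 - 1 = ((k:ℕ):ℤ) := by ring
      rw [he2, Int.emod_eq_of_lt (by positivity) (by exact_mod_cast hkn)]
      simp
    rw [hidx] at e1
    have hddk : dd (k:ℕ) = d k := by
      simp only [hdd]
      exact congrArg d (Fin.ext (Nat.mod_eq_of_lt hkn))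
    rw [hddk] at e1
    show v (((k:ℕ):ℤ) + 2) + 1 - v (((k:ℕ):ℤ) + 1) = d k
    omega

end counting
end A312

open A312 in
theorem count_avoiding_312 (n : ℕ) (hn : 2 ≤ n) :
    Set.ncard {ω : ℤ → ℤ | Function.Bijective ω ∧
      (∀ i : ℤ, ω (i + n) = ω i + n) ∧
      (∑ i ∈ Finset.Icc (1 : ℤ) (n : ℤ), ω i = ((n + 1).choose 2 : ℤ)) ∧
      ¬ ∃ i₁ i₂ i₃ : ℤ, i₁ < i₂ ∧ i₂ < i₃ ∧ ω i₂ < ω i₃ ∧ ω i₃ < ω i₁} =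
    (2 * n - 1).choose n := by
  classical
  have key : Set.ncard {ω : ℤ → ℤ | Function.Bijective ω ∧
      (∀ i : ℤ, ω (i + n) = ω i + n) ∧
      (∑ i ∈ Finset.Icc (1 : ℤ) (n : ℤ), ω i = ((n + 1).choose 2 : ℤ)) ∧
      ¬ ∃ i₁ i₂ i₃ : ℤ, i₁ < i₂ ∧ i₂ < i₃ ∧ ω i₂ < ω i₃ ∧ ω i₃ < ω i₁}
      = Nat.card {P : Fin n → ℕ // ∑ i, P i = n} := by
    rw [← Nat.card_coe_set_eq, ← card_V hn]
    refine Nat.card_congr (Equiv.ofBijective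
      (fun x => ⟨code x.1,
        fun i => code_shift x.2.2.1 i,
        fun i => avoid_code hn x.2.1.injective x.2.2.1 x.2.2.2.2 i,
        (exists_code_zero hn x.2.2.1).imp (fun i hi => hi.2)⟩) ⟨?_, ?_⟩)
    · intro x y h
      have hcode : code x.1 = code y.1 := congrArg Subtype.val h
      apply Subtype.ext
      exact code_inj hn (∑ i ∈ Finset.Icc (1:ℤ) (n:ℤ), code x.1 i) x.1 y.1
        ⟨x.2.1, x.2.2.1, x.2.2.2.1⟩ ⟨y.2.1, y.2.2.1, y.2.2.2.1⟩
        (fun i => congrFun hcode i) rfl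
    · rintro ⟨v, hvper, hvdrop, hvzero⟩
      obtain ⟨ω, hA, hc⟩ := code_surj hn (∑ i ∈ Finset.Icc (1:ℤ) (n:ℤ), v i) v
        hvper hvdrop hvzero rfl
      have havoid : Avoid ω := code_avoid hn hA.1.injective hA.2.1
        (fun i => by rw [hc i, hc (i+1)]; exact hvdrop i)
      refine ⟨⟨ω, hA.1, hA.2.1, hA.2.2, havoid⟩, ?_⟩
      apply Subtype.ext
      show code ω = v
      funext i
      exact hc i
  rw [key]
  have h2 : Nat.card {P : Fin n → ℕ // ∑ i, P i = n} = Nat.card (Sym (Fin n) n) :=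
    Nat.card_congr (Sym.equivNatSumOfFintype (Fin n) n).symm
  rw [h2, Nat.card_eq_fintype_card, Sym.card_sym_eq_choose, Fintype.card_fin]
  rw [two_mul]
end

section
/- Suppose ω ∈ S̃_n avoids the pattern 231, and let α ∈ {1, …, n} be an index where ω attains the maximum of ω(1), …, ω(n). Then ω(α) ≤ n + α − 1. -/
open Finset

lemma icc_insert_left (a b : ℤ) (h : a ≤ b) :
    Finset.Icc a b = insert a (Finset.Icc (a+1) b) := by
  ext x; simp [Finset.mem_Icc]; omega

lemma icc_insert_right (a b : ℤ) (h : a ≤ b) :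
    Finset.Icc a b = insert b (Finset.Icc a (b-1)) := by
  ext x; simp [Finset.mem_Icc]; omega

lemma sum_lower (B : ℤ) : ∀ (m : ℕ) (s : Finset ℤ), s.card = m →
    (∀ x ∈ s, B ≤ x) →
    (m : ℤ) * B + (∑ i ∈ Finset.range m, (i : ℤ)) ≤ ∑ x ∈ s, x := by
  intro m
  induction m with
  | zero =>
    intro s hc _
    rw [Finset.card_eq_zero] at hc
    simp [hc]
  | succ m ih =>
    intro s hc hB
    have hne : s.Nonempty := by
      rw [← Finset.card_pos, hc]; omega
    set Mx := s.max' hne with hMx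
    have hMmem : Mx ∈ s := s.max'_mem hne
    have hsub : s ⊆ Finset.Icc B Mx := by
      intro x hx
      simp [Finset.mem_Icc]
      exact ⟨hB x hx, s.le_max' x hx⟩
    have hcard : s.card ≤ (Finset.Icc B Mx).card := Finset.card_le_card hsub
    rw [hc, Int.card_Icc] at hcard
    have hMb : B + m ≤ Mx := by omega
    have herase : (s.erase Mx).card = m := by
      rw [Finset.card_erase_of_mem hMmem, hc]
      omega
    have hih := ih (s.erase Mx) herase (fun x hx => hB x (Finset.mem_of_mem_erase hx))
    have hsum : ∑ x ∈ s, x = Mx + ∑ x ∈ s.erase Mx, x :=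
      (Finset.add_sum_erase s id hMmem).symm
    rw [Finset.sum_range_succ]
    push_cast
    rw [hsum]
    linarith

lemma window_sum (n : ℕ) (hn : 1 ≤ n) (ω : ℤ → ℤ)
    (hshift : ∀ i : ℤ, ω (i + n) = ω i + n)
    (hsum : ∑ i ∈ Finset.Icc (1 : ℤ) (n : ℤ), ω i = ((n + 1).choose 2 : ℤ)) :
    ∀ k : ℤ, 0 ≤ k → ∑ i ∈ Finset.Icc (k+1) (k+n), ω i = ((n + 1).choose 2 : ℤ) + n * k := by
  intro k hk
  refine Int.le_induction (motive := fun k _ => ∑ i ∈ Finset.Icc (k+1) (k+n), ω i = ((n + 1).choose 2 : ℤ) + n * k) ?_ ?_ k hk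
  · simpa using hsum
  · intro k hk ih
    have hn' : (1:ℤ) ≤ n := by exact_mod_cast hn
    have h1 : Finset.Icc (k+1) (k+n) = insert (k+1) (Finset.Icc (k+2) (k+n)) := by
      rw [icc_insert_left _ _ (by linarith)]; ring_nf
    have h2 : Finset.Icc (k+1+1) (k+1+n) = insert (k+1+n) (Finset.Icc (k+2) (k+n)) := by
      rw [icc_insert_right _ _ (by linarith)]; ring_nf
    have hni1 : (k+1) ∉ Finset.Icc (k+2) (k+n) := by simp [Finset.mem_Icc]
    have hni2 : (k+1+n) ∉ Finset.Icc (k+2) (k+n) := by simp [Finset.mem_Icc]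
    rw [h2, Finset.sum_insert hni2]
    rw [h1, Finset.sum_insert hni1] at ih
    have := hshift (k+1)
    rw [this]
    rw [mul_add]
    linarith

theorem avoids_231_max_bound (n : ℕ) (hn : 2 ≤ n) (ω : ℤ → ℤ)
    (hbij : Function.Bijective ω)
    (hshift : ∀ i : ℤ, ω (i + n) = ω i + n)
    (hsum : ∑ i ∈ Finset.Icc (1 : ℤ) (n : ℤ), ω i = ((n + 1).choose 2 : ℤ))
    (havoid : ¬ ∃ i₁ i₂ i₃ : ℤ, i₁ < i₂ ∧ i₂ < i₃ ∧ ω i₃ < ω i₁ ∧ ω i₁ < ω i₂)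
    (α : ℤ) (hα : α ∈ Finset.Icc (1 : ℤ) (n : ℤ))
    (hmax : ∀ i ∈ Finset.Icc (1 : ℤ) (n : ℤ), ω i ≤ ω α) :
    ω α ≤ (n : ℤ) + α - 1 := by
  by_contra hM
  push_neg at hM
  rw [Finset.mem_Icc] at hα
  have hn' : (2:ℤ) ≤ n := by exact_mod_cast hn
  set M := ω α with hMdef
  have hMge : (n:ℤ) + α ≤ M := by omega
  -- window sum
  have hwin := window_sum n (by omega) ω hshift hsum α (by omega)
  -- split off top
  have htop : ω (α + n) = M + n := hshift α
  have hsplit : Finset.Icc (α+1) (α+(n:ℤ)) = insert (α+n) (Finset.Icc (α+1) (α+n-1)) :=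
    icc_insert_right _ _ (by linarith)
  have hni : (α+(n:ℤ)) ∉ Finset.Icc (α+1) (α+n-1) := by simp [Finset.mem_Icc]
  rw [hsplit, Finset.sum_insert hni, htop] at hwin
  -- hwin : M + n + ∑ Icc (α+1) (α+n-1) ω = C + n α
  have hex : ∃ i ∈ Finset.Icc (α+1) (α+(n:ℤ)-1), ω i < M - n := by
    by_contra h
    push_neg at h
    set s := (Finset.Icc (α+1) (α+(n:ℤ)-1)).image ω with hs
    have hcard : s.card = n - 1 := by
      rw [hs, Finset.card_image_of_injective _ hbij.injective, Int.card_Icc]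
      omega
    have hBle : ∀ x ∈ s, M - n ≤ x := by
      intro x hx
      rw [hs, Finset.mem_image] at hx
      obtain ⟨i, hi, rfl⟩ := hx
      exact h i hi
    have hlow := sum_lower (M - n) (n-1) s hcard hBle
    have hsimg : ∑ x ∈ s, x = ∑ i ∈ Finset.Icc (α+1) (α+(n:ℤ)-1), ω i := by
      rw [hs, Finset.sum_image (fun x _ y _ h => hbij.injective h)]
    rw [hsimg] at hlow
    -- Gauss sums
    have hgauss : (∑ i ∈ Finset.range (n-1), (i:ℤ)) * 2 = ((n:ℤ)-1) * ((n:ℤ)-2) := by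
      have h := congrArg (Nat.cast (R:=ℤ)) (Finset.sum_range_id_mul_two (n-1))
      push_cast [Nat.cast_sub (show 1 ≤ n by omega), Nat.cast_sub (show 1 ≤ n-1 by omega)] at h
      linear_combination h
    have hchoose : 2 * (((n + 1).choose 2 : ℕ) : ℤ) = (n:ℤ) * ((n:ℤ)+1) := by
      have hdvd : 2 ∣ (n+1) * n := by
        rw [mul_comm]; exact (Nat.even_mul_succ_self n).two_dvd
      have hnat : 2 * ((n+1).choose 2) = (n+1) * n := by
        rw [Nat.choose_two_right]
        simp only [Nat.add_sub_cancel]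
        exact Nat.mul_div_cancel' hdvd
      have := congrArg (Nat.cast : ℕ → ℤ) hnat
      push_cast at this
      linarith
    have hcast : ((n - 1 : ℕ) : ℤ) = (n:ℤ) - 1 := by
      push_cast [Nat.cast_sub (by omega : 1 ≤ n)]; ring
    rw [hcast] at hlow
    nlinarith [hlow, hwin, hgauss, hchoose, hMge]
  obtain ⟨i₃, hi₃mem, hi₃⟩ := hex
  rw [Finset.mem_Icc] at hi₃mem
  have hlow : ω (α - n) = M - n := by
    have := hshift (α - n)
    simp at this
    omega
  exact havoid ⟨α - n, α, i₃, by omega, by omega, by omega, by omega⟩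
end

section
/- If ω ∈ S̃_n avoids the pattern 231 and the maximum of ω over the base window {1, …, n} equals n (i.e., max{ω(1),…,ω(n)} = n), then {ω(1), …, ω(n)} = {1, …, n}, so ω restricts to a permutation of {1,…,n}. -/
lemma sum_Icc_one_int (n : ℕ) :
    ∑ i ∈ Finset.Icc (1 : ℤ) (n : ℤ), i = ((n + 1).choose 2 : ℤ) := by
  induction n with
  | zero => simp
  | succ m ih =>
    have hins : Finset.Icc (1 : ℤ) ((m : ℤ) + 1)
        = insert ((m : ℤ) + 1) (Finset.Icc (1 : ℤ) (m : ℤ)) := by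
      ext x
      simp only [Finset.mem_Icc, Finset.mem_insert]
      omega
    have h : ∑ i ∈ Finset.Icc (1 : ℤ) ((m : ℤ) + 1), i
        = (∑ i ∈ Finset.Icc (1 : ℤ) (m : ℤ), i) + ((m : ℤ) + 1) := by
      rw [hins, Finset.sum_insert (by simp)]
      ring
    push_cast
    rw [h, ih]
    have : (m + 2).choose 2 = (m + 1).choose 2 + (m + 1) := by
      rw [Nat.choose_succ_succ (m + 1) 1, Nat.choose_one_right]
      ring
    push_cast [this]
    ring

lemma finset_eq_Icc (n : ℕ) (S : Finset ℤ)
    (hle : ∀ x ∈ S, x ≤ (n : ℤ))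
    (hcard : S.card = (Finset.Icc (1 : ℤ) (n : ℤ)).card)
    (hsum : ∑ x ∈ S, x = ∑ x ∈ Finset.Icc (1 : ℤ) (n : ℤ), x) :
    S = Finset.Icc (1 : ℤ) (n : ℤ) := by
  set I := Finset.Icc (1 : ℤ) (n : ℤ) with hI
  have key : I ⊆ S := by
    by_contra hns
    obtain ⟨a, haI, haS⟩ := Finset.not_subset.mp hns
    have h1 : ∑ x ∈ S ∩ I, x + ∑ x ∈ S \ I, x = ∑ x ∈ S, x :=
      Finset.sum_inter_add_sum_sdiff S I _
    have h2 : ∑ x ∈ I ∩ S, x + ∑ x ∈ I \ S, x = ∑ x ∈ I, x :=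
      Finset.sum_inter_add_sum_sdiff I S _
    have hic : S ∩ I = I ∩ S := Finset.inter_comm S I
    have hdiff : ∑ x ∈ S \ I, x = ∑ x ∈ I \ S, x := by
      rw [hic] at h1; omega
    have hpos : 0 < ∑ x ∈ I \ S, x := by
      apply Finset.sum_pos
      · intro x hx
        have := (Finset.mem_Icc.mp (Finset.mem_sdiff.mp hx).1).1
        linarith
      · exact ⟨a, Finset.mem_sdiff.mpr ⟨haI, haS⟩⟩
    have hneg : ∑ x ∈ S \ I, x ≤ 0 := by
      apply Finset.sum_nonpos
      intro x hx
      obtain ⟨hxS, hxI⟩ := Finset.mem_sdiff.mp hx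
      have h1 := hle x hxS
      have h2 : ¬ (1 ≤ x ∧ x ≤ (n : ℤ)) := by
        intro h; exact hxI (Finset.mem_Icc.mpr h)
      omega
    omega
  exact (Finset.eq_of_subset_of_card_le key (le_of_eq hcard)).symm

theorem avoids_231_max_n_window (n : ℕ) (hn : 2 ≤ n) (ω : ℤ → ℤ)
    (hbij : Function.Bijective ω)
    (hshift : ∀ i : ℤ, ω (i + n) = ω i + n)
    (hsum : ∑ i ∈ Finset.Icc (1 : ℤ) (n : ℤ), ω i = ((n + 1).choose 2 : ℤ))
    (havoid : ¬ ∃ i₁ i₂ i₃ : ℤ, i₁ < i₂ ∧ i₂ < i₃ ∧ ω i₃ < ω i₁ ∧ ω i₁ < ω i₂)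
    (hle : ∀ i ∈ Finset.Icc (1 : ℤ) (n : ℤ), ω i ≤ (n : ℤ))
    (heq : ∃ i ∈ Finset.Icc (1 : ℤ) (n : ℤ), ω i = (n : ℤ)) :
    ω '' (Set.Icc (1 : ℤ) (n : ℤ)) = Set.Icc (1 : ℤ) (n : ℤ) := by
  have hinj := hbij.1
  set S := (Finset.Icc (1 : ℤ) (n : ℤ)).image ω with hS
  have hSeq : S = Finset.Icc (1 : ℤ) (n : ℤ) := by
    apply finset_eq_Icc
    · intro x hx
      obtain ⟨i, hi, rfl⟩ := Finset.mem_image.mp hx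
      exact hle i hi
    · exact Finset.card_image_of_injective _ hinj
    · rw [Finset.sum_image (fun a _ b _ h => hinj h), hsum, sum_Icc_one_int]
  have := congrArg (fun (t : Finset ℤ) => (t : Set ℤ)) hSeq
  simpa [hS, Finset.coe_image, Finset.coe_Icc] using this
end

section
/- For any pattern p ∈ S_m that avoids 321, there exists a constant L (depending on p and n) such that every ω ∈ S̃_n with length ℓ(ω) > L contains p; consequently only finitely many elements of S̃_n avoid p. -/
/-- `ω` contains the pattern `p`: some increasing sequence of indices has values in
the same relative order as `p`. -/
def ContainsPattern {m : ℕ} (ω : ℤ → ℤ) (p : Equiv.Perm (Fin m)) : Prop :=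
  ∃ f : Fin m → ℤ, StrictMono f ∧ ∀ a b : Fin m, p a < p b ↔ ω (f a) < ω (f b)

/-- The Coxeter length of an affine permutation: the number of affine inversions. -/
noncomputable def affineLength (n : ℕ) (ω : ℤ → ℤ) : ℕ :=
  Set.ncard {q : ℤ × ℤ | 1 ≤ q.1 ∧ q.1 ≤ (n : ℤ) ∧ q.1 < q.2 ∧ ω q.2 < ω q.1}

namespace AffProof

open Finset

variable {m : ℕ}

/-- left-to-right maximum -/
def Ap (p : Equiv.Perm (Fin m)) (t : Fin m) : Prop := ∀ s, s < t → p s < p t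

instance (p : Equiv.Perm (Fin m)) : DecidablePred (Ap p) := fun t => by
  unfold Ap; infer_instance

/-- elements carrying the top `j` values -/
def Sj (p : Equiv.Perm (Fin m)) (j : ℕ) : Finset (Fin m) :=
  Finset.univ.filter (fun t => m ≤ (p t).val + j)

lemma mem_Sj {p : Equiv.Perm (Fin m)} {j : ℕ} {t : Fin m} :
    t ∈ Sj p j ↔ m ≤ (p t).val + j := by simp [Sj]

lemma core_ind (p : Equiv.Perm (Fin m)) (hm : 1 ≤ m)
    (h321 : ∀ a b c : Fin m, a < b → b < c → p c < p b → p b < p a → False)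
    (c : ℤ) (hc : (2:ℤ)^m ≤ c) :
    ∀ j : ℕ, 1 ≤ j → j ≤ m →
    ∃ col : Fin m → ℤ,
      (∀ a ∈ Sj p j, ∀ b ∈ Sj p j, a < b → col a + 2^(m-j) ≤ col b) ∧
      (∀ a ∈ Sj p j, ∀ b ∈ Sj p j, a < b → p b < p a → col b ≤ col a + c) ∧
      (∀ a ∈ Sj p j, ∀ b ∈ Sj p j, a < b → p a < p b → Ap p a → ¬ Ap p b →
        col a + c + 1 ≤ col b) ∧
      (∀ a ∈ Sj p j, ∀ e ∈ Sj p j, a ≤ e → (∃ x : Fin m, e < x ∧ (p x).val + j < m) →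
        col e ≤ col a + c - (2^(m-j) - 1)) := by
  have hpow_le : ∀ k : ℕ, k ≤ m → (2:ℤ)^k ≤ c :=
    fun k hk => le_trans (pow_le_pow_right₀ (by norm_num) hk) hc
  have hpow_pos : ∀ k : ℕ, (1:ℤ) ≤ 2^k := fun k => by
    have := pow_pos (show (0:ℤ) < 2 by norm_num) k; omega
  refine Nat.le_induction ?_ ?_
  · -- base j = 1
    intro _
    have huniq : ∀ a ∈ Sj p 1, ∀ b ∈ Sj p 1, a = b := by
      intro a ha b hb
      have h1 := mem_Sj.mp ha; have h2 := mem_Sj.mp hb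
      have ha' := (p a).isLt; have hb' := (p b).isLt
      exact p.injective (Fin.ext (by omega))
    refine ⟨fun _ => 0, ?_, ?_, ?_, ?_⟩
    · intro a ha b hb hab; exact absurd (huniq a ha b hb) (ne_of_lt hab)
    · intro a ha b hb hab _; exact absurd (huniq a ha b hb) (ne_of_lt hab)
    · intro a ha b hb hab _ _ _; exact absurd (huniq a ha b hb) (ne_of_lt hab)
    · intro a ha e he _ _
      have := hpow_le (m-1) (by omega)
      have := hpow_pos (m-1)
      simp only []
      linarith
  · -- step
    rintro j hj1 ih hjm1
    obtain ⟨col, hP1, hP2, hP3, hP4⟩ := ih (by omega)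
    have hjm : j < m := by omega
    set x : Fin m := p.symm ⟨m - 1 - j, by omega⟩ with hxdef
    have hpx : (p x).val = m - 1 - j := by
      rw [hxdef, Equiv.apply_symm_apply]
    have hxS1 : x ∈ Sj p (j+1) := mem_Sj.mpr (by omega)
    have hxS : x ∉ Sj p j := by rw [mem_Sj, hpx]; omega
    have hsub : ∀ t ∈ Sj p j, t ∈ Sj p (j+1) := fun t ht =>
      mem_Sj.mpr (by have := mem_Sj.mp ht; omega)
    have hmem' : ∀ t, t ∈ Sj p (j+1) → t ≠ x → t ∈ Sj p j := by
      intro t ht hne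
      have h1 := mem_Sj.mp ht
      have h2 : (p t).val ≠ m - 1 - j := by
        intro h
        exact hne (p.injective (Fin.ext (by rw [hpx, h])))
      exact mem_Sj.mpr (by omega)
    have hvx : ∀ t ∈ Sj p j, p x < p t := by
      intro t ht
      have := mem_Sj.mp ht
      exact Fin.lt_def.mpr (by omega)
    have hg1 : (1:ℤ) ≤ 2^(m-(j+1)) := hpow_pos _
    have hgsplit : (2:ℤ)^(m-j) = 2^(m-(j+1)) + 2^(m-(j+1)) := by
      rw [show m - j = (m-(j+1)) + 1 by omega, pow_succ]; ring
    have hgc : (2:ℤ)^(m-(j+1)) ≤ c := hpow_le _ (by omega)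
    have hgc' : (2:ℤ)^(m-j) ≤ c := hpow_le _ (by omega)
    by_cases hEx : ∃ e ∈ Sj p j, e < x
    · -- B-insert: x has an element of Sj before it
      obtain ⟨e₁, he₁S, he₁x⟩ := hEx
      have hprevne : ((Sj p j).filter (fun t => t < x)).Nonempty :=
        ⟨e₁, Finset.mem_filter.mpr ⟨he₁S, he₁x⟩⟩
      obtain ⟨prev, hprevmem, hprevge⟩ :
          ∃ prev ∈ (Sj p j).filter (fun t => t < x),
            ∀ a ∈ (Sj p j).filter (fun t => t < x), a ≤ prev :=
        ⟨_, Finset.max'_mem _ hprevne, fun a ha => Finset.le_max' _ a ha⟩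
      have hprevS : prev ∈ Sj p j := (Finset.mem_filter.mp hprevmem).1
      have hprevx : prev < x := (Finset.mem_filter.mp hprevmem).2
      have hprevmax : ∀ a ∈ Sj p j, a < x → a ≤ prev := fun a ha hax =>
        hprevge a (Finset.mem_filter.mpr ⟨ha, hax⟩)
      have hFutprev : ∃ y : Fin m, prev < y ∧ (p y).val + j < m := ⟨x, hprevx, by omega⟩
      set colx : ℤ := col prev + 2^(m-(j+1)) with hcolxdef
      set ncol : Fin m → ℤ := Function.update col x colx with hncol
      have hupd : ∀ e ∈ Sj p j, ncol e = col e := fun e he =>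
        Function.update_of_ne (fun h => hxS (by rw [← h]; exact he)) _ _
      have hupdx : ncol x = colx := Function.update_self _ _ _
      have hcolmono : ∀ a ∈ Sj p j, a ≤ prev → col a ≤ col prev := by
        intro a ha hale
        rcases eq_or_lt_of_le hale with h | h
        · rw [h]
        · linarith [hP1 a ha prev hprevS h, hpow_pos (m-j)]
      refine ⟨ncol, ?_, ?_, ?_, ?_⟩
      · -- P1
        intro a ha b hb hab
        by_cases hax : a = x
        · subst hax
          have hbx : b ≠ x := fun h => (ne_of_lt hab) (by rw [h])
          have hbS := hmem' b hb hbx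
          have hxb : x < b := hab
          rw [hupdx, hupd b hbS]
          have : prev < b := lt_trans hprevx hxb
          have := hP1 prev hprevS b hbS this
          rw [hcolxdef]
          linarith [hgsplit]
        · have haS := hmem' a ha hax
          by_cases hbx : b = x
          · subst hbx
            rw [hupd a haS, hupdx, hcolxdef]
            have := hcolmono a haS (hprevmax a haS hab)
            linarith
          · have hbS := hmem' b hb hbx
            rw [hupd a haS, hupd b hbS]
            have := hP1 a haS b hbS hab
            linarith [hgsplit, hg1]
      · -- P2
        intro a ha b hb hab hpba
        by_cases hbx : b = x
        · subst hbx
          have hax : a ≠ x := fun h => (ne_of_lt hab) (by rw [h])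
          have haS := hmem' a ha hax
          rw [hupd a haS, hupdx, hcolxdef]
          have h4 := hP4 a haS prev hprevS (hprevmax a haS hab) hFutprev
          linarith [hgsplit]
        · have hbS := hmem' b hb hbx
          by_cases hax : a = x
          · subst hax
            exact absurd hpba (asymm (hvx b hbS))
          · have haS := hmem' a ha hax
            rw [hupd a haS, hupd b hbS]
            exact hP2 a haS b hbS hab hpba
      · -- P3
        intro a ha b hb hab hpab hApa hApb
        by_cases hax : a = x
        · subst hax
          exact absurd (hApa prev hprevx) (asymm (hvx prev hprevS))
        · have haS := hmem' a ha hax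
          by_cases hbx : b = x
          · subst hbx
            exact absurd hpab (asymm (hvx a haS))
          · have hbS := hmem' b hb hbx
            rw [hupd a haS, hupd b hbS]
            exact hP3 a haS b hbS hab hpab hApa hApb
      · -- P4
        intro a ha e he hae hFut
        by_cases hex : e = x
        · subst hex
          by_cases hax : a = x
          · subst hax
            rw [hupdx]
            linarith [hgc, hg1]
          · have haS := hmem' a ha hax
            have hax' : a < x := lt_of_le_of_ne hae hax
            rw [hupd a haS, hupdx, hcolxdef]
            have h4 := hP4 a haS prev hprevS (hprevmax a haS hax') hFutprev
            linarith [hgsplit]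
        · have heS := hmem' e he hex
          obtain ⟨x', hex', hvx'⟩ := hFut
          have hFutj : ∃ y : Fin m, e < y ∧ (p y).val + j < m := ⟨x', hex', by omega⟩
          by_cases hax : a = x
          · subst hax
            have hxe : x < e := lt_of_le_of_ne hae (Ne.symm hex)
            have hpe : prev ≤ e := le_of_lt (lt_trans hprevx hxe)
            have h4 := hP4 prev hprevS e heS hpe hFutj
            rw [hupdx, hupd e heS, hcolxdef]
            linarith [hgsplit, hg1]
          · have haS := hmem' a ha hax
            rw [hupd a haS, hupd e heS]
            have h4 := hP4 a haS e heS hae hFutj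
            linarith [hgsplit, hg1]
    · -- A-insert: x is before everything in Sj p j
      have hA : ∀ e ∈ Sj p j, x < e := by
        intro e he
        rcases lt_trichotomy x e with h | h | h
        · exact h
        · exact absurd (h ▸ he) hxS
        · exact absurd ⟨e, he, h⟩ hEx
      have hne : (Sj p j).Nonempty := by
        refine ⟨p.symm ⟨m-1, by omega⟩, mem_Sj.mpr ?_⟩
        rw [Equiv.apply_symm_apply]
        show m ≤ m - 1 + j
        omega
      set term : Fin m → ℤ := fun e => if Ap p e then col e - 2^(m-(j+1)) else col e - (c+1)
        with htermdef
      have hterm_le : ∀ e, term e ≤ col e - 2^(m-(j+1)) := by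
        intro e
        rw [htermdef]
        dsimp only
        split_ifs
        · exact le_rfl
        · linarith [hgc]
      obtain ⟨colx, hcolxmem, hcolxle⟩ :
          ∃ v ∈ (Sj p j).image term, ∀ b ∈ (Sj p j).image term, v ≤ b :=
        ⟨_, Finset.min'_mem _ (hne.image term), fun b hb => Finset.min'_le _ b hb⟩
      have hmin : ∀ e ∈ Sj p j, colx ≤ term e := fun e he =>
        hcolxle (term e) (Finset.mem_image_of_mem term he)
      have hupper : ∀ e ∈ Sj p j, colx ≤ col e - 2^(m-(j+1)) := fun e he =>
        le_trans (hmin e he) (hterm_le e)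
      have hupperB : ∀ e ∈ Sj p j, ¬ Ap p e → colx ≤ col e - (c+1) := by
        intro e he hB
        have := hmin e he
        rw [htermdef] at this
        dsimp only at this
        rwa [if_neg hB] at this
      obtain ⟨e₀, he₀S, he₀⟩ := Finset.mem_image.mp hcolxmem
      set ncol : Fin m → ℤ := Function.update col x colx with hncol
      have hupd : ∀ e ∈ Sj p j, ncol e = col e := fun e he =>
        Function.update_of_ne (fun h => hxS (by rw [← h]; exact he)) _ _
      have hupdx : ncol x = colx := Function.update_self _ _ _
      refine ⟨ncol, ?_, ?_, ?_, ?_⟩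
      · -- P1
        intro a ha b hb hab
        by_cases hax : a = x
        · subst hax
          have hbx : b ≠ x := fun h => (ne_of_lt hab) (by rw [h])
          have hbS := hmem' b hb hbx
          rw [hupdx, hupd b hbS]
          linarith [hupper b hbS]
        · have haS := hmem' a ha hax
          by_cases hbx : b = x
          · subst hbx
            exact absurd hab (asymm (hA a haS))
          · have hbS := hmem' b hb hbx
            rw [hupd a haS, hupd b hbS]
            have := hP1 a haS b hbS hab
            linarith [hgsplit, hg1]
      · -- P2
        intro a ha b hb hab hpba
        by_cases hbx : b = x
        · subst hbx
          have hax : a ≠ x := fun h => (ne_of_lt hab) (by rw [h])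
          have haS := hmem' a ha hax
          exact absurd hab (asymm (hA a haS))
        · have hbS := hmem' b hb hbx
          by_cases hax : a = x
          · subst hax
            exact absurd hpba (asymm (hvx b hbS))
          · have haS := hmem' a ha hax
            rw [hupd a haS, hupd b hbS]
            exact hP2 a haS b hbS hab hpba
      · -- P3
        intro a ha b hb hab hpab hApa hApb
        by_cases hbx : b = x
        · subst hbx
          have hax : a ≠ x := fun h => (ne_of_lt hab) (by rw [h])
          have haS := hmem' a ha hax
          exact absurd hab (asymm (hA a haS))
        · have hbS := hmem' b hb hbx
          by_cases hax : a = x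
          · subst hax
            rw [hupdx, hupd b hbS]
            linarith [hupperB b hbS hApb]
          · have haS := hmem' a ha hax
            rw [hupd a haS, hupd b hbS]
            exact hP3 a haS b hbS hab hpab hApa hApb
      · -- P4
        intro a ha e he hae hFut
        by_cases hex : e = x
        · subst hex
          by_cases hax : a = x
          · subst hax
            rw [hupdx]
            linarith [hgc, hg1]
          · have haS := hmem' a ha hax
            exact absurd (lt_of_le_of_ne hae hax ) (asymm (hA a haS))
        · have heS := hmem' e he hex
          obtain ⟨x', hex', hvx'⟩ := hFut
          have hFutj : ∃ y : Fin m, e < y ∧ (p y).val + j < m := ⟨x', hex', by omega⟩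
          by_cases hax : a = x
          · subst hax
            rw [hupdx, hupd e heS]
            rw [htermdef] at he₀
            dsimp only at he₀
            by_cases hApe₀ : Ap p e₀
            · rw [if_pos hApe₀] at he₀
              by_cases heee : e₀ ≤ e
              · have h4 := hP4 e₀ he₀S e heS heee hFutj
                linarith [hgsplit]
              · push_neg at heee
                have := hP1 e heS e₀ he₀S heee
                linarith [hgsplit, hg1, hgc]
            · rw [if_neg hApe₀] at he₀
              by_cases heee : e₀ ≤ e
              · exfalso
                have hA' : ∃ s, s < e₀ ∧ ¬ (p s < p e₀) := by
                  by_contra hAll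
                  push_neg at hAll
                  exact hApe₀ hAll
                obtain ⟨w, hw1, hw2⟩ := hA'
                have hw3 : p e₀ < p w :=
                  lt_of_le_of_ne (not_lt.mp hw2)
                    (fun h => (ne_of_lt hw1) (p.injective h).symm)
                have hve₀ := mem_Sj.mp he₀S
                have hpxe : p x' < p e₀ := Fin.lt_def.mpr (by omega)
                exact h321 w e₀ x' hw1 (lt_of_le_of_lt heee hex') hpxe hw3
              · push_neg at heee
                have := hP1 e heS e₀ he₀S heee
                linarith [hgsplit, hg1]
          · have haS := hmem' a ha hax
            rw [hupd a haS, hupd e heS]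
            have h4 := hP4 a haS e heS hae hFutj
            linarith [hgsplit, hg1]

lemma core (p : Equiv.Perm (Fin m)) (hm : 1 ≤ m)
    (h321 : ∀ a b c : Fin m, a < b → b < c → p c < p b → p b < p a → False)
    (c : ℤ) (hc : (2:ℤ)^m ≤ c) :
    ∃ col : Fin m → ℤ, StrictMono col ∧
      (∀ a b : Fin m, a < b → p b < p a → col b ≤ col a + c) ∧
      (∀ a b : Fin m, a < b → p a < p b → Ap p a → ¬ Ap p b → col a + c + 1 ≤ col b) := by
  obtain ⟨col, h1, h2, h3, _⟩ := core_ind p hm h321 c hc m (by omega) (le_refl m)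
  have hmem : ∀ t : Fin m, t ∈ Sj p m := fun t => mem_Sj.mpr (by omega)
  refine ⟨col, ?_, fun a b hab => h2 a (hmem a) b (hmem b) hab,
    fun a b hab => h3 a (hmem a) b (hmem b) hab⟩
  intro a b hab
  have := h1 a (hmem a) b (hmem b) hab
  have hpos : (0:ℤ) < 2^(m - m) := pow_pos (by norm_num) _
  linarith

section Harness

variable {n : ℕ} {ω : ℤ → ℤ}

lemma periodic_all (hper : ∀ i : ℤ, ω (i + n) = ω i + n) :
    ∀ (k z : ℤ), ω (z + (n:ℤ) * k) = ω z + (n:ℤ) * k := by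
  intro k
  induction k using Int.induction_on with
  | zero => simp
  | succ k ih =>
    intro z
    have h1 : z + (n:ℤ) * ((k:ℤ)+1) = (z + (n:ℤ)*k) + n := by ring
    rw [h1, hper, ih z]
    ring
  | pred k ih =>
    intro z
    have h1 : (z + (n:ℤ) * (-(k:ℤ)-1)) + n = z + (n:ℤ) * (-(k:ℤ)) := by ring
    have h2 := hper (z + (n:ℤ) * (-(k:ℤ)-1))
    rw [h1, ih z] at h2
    linarith

lemma decomp (hn : 1 ≤ n) (z : ℤ) :
    ∃ q r : ℤ, 1 ≤ r ∧ r ≤ n ∧ z = r + (n:ℤ) * q := by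
  have hn0 : (0:ℤ) < n := by exact_mod_cast hn
  refine ⟨(z - 1) / n, (z - 1) % n + 1, ?_, ?_, ?_⟩
  · have := Int.emod_nonneg (z - 1) (by omega : (n:ℤ) ≠ 0); omega
  · have := Int.emod_lt_of_pos (z - 1) hn0; omega
  · have := Int.mul_ediv_add_emod (z - 1) (n:ℤ)
    linarith

lemma invSet_finite (hn : 1 ≤ n) (hper : ∀ i : ℤ, ω (i + n) = ω i + n) :
    {q : ℤ × ℤ | 1 ≤ q.1 ∧ q.1 ≤ (n : ℤ) ∧ q.1 < q.2 ∧ ω q.2 < ω q.1}.Finite := by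
  have hne : (Finset.Icc (1:ℤ) (n:ℤ)).Nonempty :=
    ⟨1, Finset.mem_Icc.mpr ⟨le_refl _, by exact_mod_cast hn⟩⟩
  obtain ⟨C, hC⟩ : ∃ C : ℤ, ∀ z ∈ Finset.Icc (1:ℤ) (n:ℤ), z - ω z ≤ C :=
    ⟨(Finset.Icc (1:ℤ) (n:ℤ)).sup' hne (fun r => r - ω r),
      fun z hz => Finset.le_sup' (fun r => r - ω r) hz⟩
  obtain ⟨M, hM⟩ : ∃ M : ℤ, ∀ z ∈ Finset.Icc (1:ℤ) (n:ℤ), ω z ≤ M :=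
    ⟨(Finset.Icc (1:ℤ) (n:ℤ)).sup' hne ω, fun z hz => Finset.le_sup' ω hz⟩
  have hlow : ∀ z : ℤ, z - ω z ≤ C := by
    intro z
    obtain ⟨q, r, hr1, hr2, rfl⟩ := decomp hn z
    have hz := periodic_all hper q r
    have hr := hC r (Finset.mem_Icc.mpr ⟨hr1, hr2⟩)
    rw [hz]
    linarith
  apply Set.Finite.subset
    (Finset.finite_toSet (Finset.Icc (1:ℤ) (n:ℤ) ×ˢ Finset.Icc (1:ℤ) (M + C)))
  rintro ⟨a, b⟩ ⟨h1, h2, h3, h4⟩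
  have h4' : ω b < ω a := h4
  have h3' : a < b := h3
  have hMa : ω a ≤ M := hM a (Finset.mem_Icc.mpr ⟨h1, h2⟩)
  have h5 := hlow b
  simp only [Finset.coe_product, Set.mem_prod, Finset.mem_coe, Finset.mem_Icc]
  exact ⟨⟨h1, h2⟩, by omega, by omega⟩

lemma length_le_of_small (hn : 1 ≤ n) (hinj : Function.Injective ω) (K : ℕ)
    (hall : ∀ i j : ℤ, 1 ≤ i → i ≤ n → i < j → ω j < ω i → ω i - ω j ≤ (K:ℤ)) :
    affineLength n ω ≤ n * K := by
  classical
  set S := {q : ℤ × ℤ | 1 ≤ q.1 ∧ q.1 ≤ (n : ℤ) ∧ q.1 < q.2 ∧ ω q.2 < ω q.1} with hS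
  set φ : ℤ × ℤ → ℤ × ℤ := fun q => (q.1, ω q.1 - ω q.2) with hφ
  have hinjOn : Set.InjOn φ S := by
    intro q hq q' hq' heq
    have h1 : q.1 = q'.1 := (Prod.ext_iff.mp heq).1
    have h2 : ω q.1 - ω q.2 = ω q'.1 - ω q'.2 := (Prod.ext_iff.mp heq).2
    have h3 : ω q.2 = ω q'.2 := by rw [h1] at h2; linarith
    exact Prod.ext h1 (hinj h3)
  have hsub : φ '' S ⊆ ↑(Finset.Icc (1:ℤ) (n:ℤ) ×ˢ Finset.Icc (1:ℤ) (K:ℤ)) := by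
    rintro _ ⟨q, hq, rfl⟩
    obtain ⟨ha, hb, hc', hd⟩ := hq
    simp only [Finset.coe_product, Set.mem_prod, Finset.mem_coe, Finset.mem_Icc, hφ]
    exact ⟨⟨ha, hb⟩, ⟨by omega, hall q.1 q.2 ha hb hc' hd⟩⟩
  have hcard : (Finset.Icc (1:ℤ) (n:ℤ) ×ˢ Finset.Icc (1:ℤ) (K:ℤ)).card = n * K := by
    rw [Finset.card_product, Int.card_Icc, Int.card_Icc]
    have e1 : ((n:ℤ) + 1 - 1).toNat = n := by omega
    have e2 : ((K:ℤ) + 1 - 1).toNat = K := by omega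
    rw [e1, e2]
  calc affineLength n ω = S.ncard := rfl
    _ = (φ '' S).ncard := (Set.ncard_image_of_injOn hinjOn).symm
    _ ≤ (↑(Finset.Icc (1:ℤ) (n:ℤ) ×ˢ Finset.Icc (1:ℤ) (K:ℤ)) : Set (ℤ × ℤ)).ncard :=
        Set.ncard_le_ncard hsub (Finset.finite_toSet _)
    _ = (Finset.Icc (1:ℤ) (n:ℤ) ×ˢ Finset.Icc (1:ℤ) (K:ℤ)).card := Set.ncard_coe_finset _
    _ = n * K := hcard

lemma sum_Icc_id (n : ℕ) :
    (∑ i ∈ Finset.Icc (1:ℤ) (n:ℤ), i) = ((n+1).choose 2 : ℤ) := by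
  induction n with
  | zero =>
    rw [show ((0:ℕ):ℤ) = 0 by norm_num, Finset.Icc_eq_empty (by norm_num)]
    simp
  | succ n ih =>
    have hins : Finset.Icc (1:ℤ) ((n:ℤ)+1) = insert ((n:ℤ)+1) (Finset.Icc (1:ℤ) (n:ℤ)) := by
      ext y
      simp only [Finset.mem_Icc, Finset.mem_insert]
      omega
    have hnotmem : ((n:ℤ)+1) ∉ Finset.Icc (1:ℤ) (n:ℤ) := by
      simp only [Finset.mem_Icc]; omega
    have hcast : ((n+1 : ℕ):ℤ) = (n:ℤ) + 1 := by push_cast; ring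
    rw [hcast, hins, Finset.sum_insert hnotmem, ih]
    have hch : (n+2).choose 2 = (n+1) + (n+1).choose 2 := by
      rw [show n + 2 = (n+1) + 1 by ring, Nat.choose_succ_succ (n+1) 1, Nat.choose_one_right]
    rw [show n + 1 + 1 = n + 2 by ring, hch]
    push_cast
    ring

lemma exists_le (hn : 1 ≤ n)
    (hsum : ∑ i ∈ Finset.Icc (1:ℤ) (n:ℤ), ω i = ((n+1).choose 2 : ℤ)) :
    ∃ k : ℤ, 1 ≤ k ∧ k ≤ n ∧ ω k ≤ k := by
  by_contra h
  push_neg at h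
  have hne : (Finset.Icc (1:ℤ) (n:ℤ)).Nonempty :=
    ⟨1, Finset.mem_Icc.mpr ⟨le_refl _, by exact_mod_cast hn⟩⟩
  have hlt : (∑ i ∈ Finset.Icc (1:ℤ) (n:ℤ), i) < ∑ i ∈ Finset.Icc (1:ℤ) (n:ℤ), ω i :=
    Finset.sum_lt_sum_of_nonempty hne (fun i hi => by
      have := Finset.mem_Icc.mp hi
      exact h i this.1 this.2)
  rw [sum_Icc_id, hsum] at hlt
  exact lt_irrefl _ hlt

lemma exists_ge (hn : 1 ≤ n)
    (hsum : ∑ i ∈ Finset.Icc (1:ℤ) (n:ℤ), ω i = ((n+1).choose 2 : ℤ)) :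
    ∃ k : ℤ, 1 ≤ k ∧ k ≤ n ∧ k ≤ ω k := by
  by_contra h
  push_neg at h
  have hne : (Finset.Icc (1:ℤ) (n:ℤ)).Nonempty :=
    ⟨1, Finset.mem_Icc.mpr ⟨le_refl _, by exact_mod_cast hn⟩⟩
  have hlt : (∑ i ∈ Finset.Icc (1:ℤ) (n:ℤ), ω i) < ∑ i ∈ Finset.Icc (1:ℤ) (n:ℤ), i :=
    Finset.sum_lt_sum_of_nonempty hne (fun i hi => by
      have := Finset.mem_Icc.mp hi
      exact h i this.1 this.2)
  rw [sum_Icc_id, hsum] at hlt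
  exact lt_irrefl _ hlt

lemma reduce (hn : 1 ≤ n) (hper : ∀ i : ℤ, ω (i + n) = ω i + n) (D : ℤ) :
    ∀ (N : ℕ) (i j : ℤ), (j - i).toNat ≤ N → i < j → ω j < ω i → D ≤ ω i - ω j →
    ∃ j', i < j' ∧ j' < i + n ∧ ω j' < ω i ∧ D ≤ ω i - ω j' := by
  intro N
  induction N with
  | zero => intro i j h1 h2 _ _; exfalso; omega
  | succ N ih =>
    intro i j h1 h2 h3 h4
    have hn0 : (0:ℤ) < n := by exact_mod_cast hn
    by_cases hj : j < i + n
    · exact ⟨j, h2, hj, h3, h4⟩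
    · push_neg at hj
      have hne : j ≠ i + n := by
        intro h
        have h5 := hper i
        rw [← h] at h5
        omega
      have hgt : i + (n:ℤ) < j := lt_of_le_of_ne hj (Ne.symm hne)
      have hωj : ω (j - n) = ω j - n := by
        have h6 := hper (j - (n:ℤ))
        have h7 : j - (n:ℤ) + n = j := by ring
        rw [h7] at h6
        omega
      exact ih i (j - n) (by omega) (by omega) (by omega) (by omega)

lemma bound_up (hn : 1 ≤ n) (hper : ∀ i : ℤ, ω (i + n) = ω i + n) (L : ℕ)
    (hlen : affineLength n ω ≤ L) (k : ℤ) (hk1 : 1 ≤ k) (hk2 : k ≤ n) (hk3 : ω k ≤ k)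
    (r : ℤ) (hr1 : 1 ≤ r) (hr2 : r ≤ n) :
    ω r - r ≤ (n:ℤ) * L + 3 * n + 3 := by
  classical
  by_contra hcon
  push_neg at hcon
  have hn0 : (0:ℤ) < n := by exact_mod_cast hn
  set t : ℤ := ω r - r with ht
  set D1 : ℤ := (r - k) / n with hD1
  set D2 : ℤ := (r - k + t - 1) / n with hD2
  have hm1 := Int.mul_ediv_add_emod (r - k) (n:ℤ)
  have hm1a := Int.emod_nonneg (r - k) (by omega : (n:ℤ) ≠ 0)
  have hm1b := Int.emod_lt_of_pos (r - k) hn0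
  have hm2 := Int.mul_ediv_add_emod (r - k + t - 1) (n:ℤ)
  have hm2a := Int.emod_nonneg (r - k + t - 1) (by omega : (n:ℤ) ≠ 0)
  have hm2b := Int.emod_lt_of_pos (r - k + t - 1) hn0
  set S := {q : ℤ × ℤ | 1 ≤ q.1 ∧ q.1 ≤ (n : ℤ) ∧ q.1 < q.2 ∧ ω q.2 < ω q.1} with hS
  have hfin : S.Finite := invSet_finite hn hper
  set φ : ℤ → ℤ × ℤ := fun q => (r, k + (n:ℤ) * q) with hφ
  have himg : ∀ q ∈ Finset.Icc (D1 + 1) D2, φ q ∈ S := by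
    intro q hq
    have hq' := Finset.mem_Icc.mp hq
    have hlow : (n:ℤ) * (D1 + 1) ≤ n * q := mul_le_mul_of_nonneg_left hq'.1 (le_of_lt hn0)
    have hhigh : (n:ℤ) * q ≤ n * D2 := mul_le_mul_of_nonneg_left hq'.2 (le_of_lt hn0)
    have hexp : (n:ℤ) * (D1 + 1) = n * D1 + n := by ring
    have hval := periodic_all hper q k
    refine ⟨hr1, hr2, ?_, ?_⟩
    · show r < k + (n:ℤ) * q
      linarith
    · show ω (k + (n:ℤ) * q) < ω r
      rw [hval]
      linarith
  have hinjφ : Set.InjOn φ ↑(Finset.Icc (D1 + 1) D2) := by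
    intro a _ b _ hab
    have h1 : k + (n:ℤ) * a = k + n * b := (Prod.ext_iff.mp hab).2
    have h2 : (n:ℤ) * a = n * b := by linarith
    exact mul_left_cancel₀ (by omega : (n:ℤ) ≠ 0) h2
  have hcard1 : ((Finset.Icc (D1 + 1) D2).image φ).card = (Finset.Icc (D1 + 1) D2).card :=
    Finset.card_image_of_injOn (fun a ha b hb h => hinjφ ha hb h)
  have hcard2 : (L:ℤ) < D2 - D1 - 1 := by
    have hexp : (n:ℤ) * (D2 - D1 - 1) = n * D2 - n * D1 - n := by ring
    have h5 : (n:ℤ) * (L:ℤ) < n * (D2 - D1 - 1) := by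
      rw [hexp]
      nlinarith
    exact lt_of_mul_lt_mul_left h5 (le_of_lt hn0)
  have hcard3 : L + 1 ≤ ((Finset.Icc (D1 + 1) D2).image φ).card := by
    rw [hcard1, Int.card_Icc]
    omega
  have hle : ((Finset.Icc (D1 + 1) D2).image φ).card ≤ affineLength n ω := by
    have hsub : ↑((Finset.Icc (D1 + 1) D2).image φ) ⊆ S := by
      intro y hy
      simp only [Finset.coe_image, Set.mem_image, Finset.mem_coe] at hy
      obtain ⟨q, hq, rfl⟩ := hy
      exact himg q hq
    calc ((Finset.Icc (D1 + 1) D2).image φ).card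
        = (↑((Finset.Icc (D1 + 1) D2).image φ) : Set (ℤ × ℤ)).ncard :=
          (Set.ncard_coe_finset _).symm
      _ ≤ S.ncard := Set.ncard_le_ncard hsub hfin
      _ = affineLength n ω := rfl
  omega

lemma bound_down (hn : 1 ≤ n) (hper : ∀ i : ℤ, ω (i + n) = ω i + n) (L : ℕ)
    (hlen : affineLength n ω ≤ L) (k : ℤ) (hk1 : 1 ≤ k) (hk2 : k ≤ n) (hk3 : k ≤ ω k)
    (r : ℤ) (hr1 : 1 ≤ r) (hr2 : r ≤ n) :
    r - ω r ≤ (n:ℤ) * L + 3 * n + 3 := by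
  classical
  by_contra hcon
  push_neg at hcon
  have hn0 : (0:ℤ) < n := by exact_mod_cast hn
  set t : ℤ := r - ω r with ht
  set D1 : ℤ := (k - r) / n with hD1
  set D2 : ℤ := (ω k - ω r - 1) / n with hD2
  have hm1 := Int.mul_ediv_add_emod (k - r) (n:ℤ)
  have hm1a := Int.emod_nonneg (k - r) (by omega : (n:ℤ) ≠ 0)
  have hm1b := Int.emod_lt_of_pos (k - r) hn0
  have hm2 := Int.mul_ediv_add_emod (ω k - ω r - 1) (n:ℤ)
  have hm2a := Int.emod_nonneg (ω k - ω r - 1) (by omega : (n:ℤ) ≠ 0)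
  have hm2b := Int.emod_lt_of_pos (ω k - ω r - 1) hn0
  set S := {q : ℤ × ℤ | 1 ≤ q.1 ∧ q.1 ≤ (n : ℤ) ∧ q.1 < q.2 ∧ ω q.2 < ω q.1} with hS
  have hfin : S.Finite := invSet_finite hn hper
  set φ : ℤ → ℤ × ℤ := fun q => (k, r + (n:ℤ) * q) with hφ
  have himg : ∀ q ∈ Finset.Icc (D1 + 1) D2, φ q ∈ S := by
    intro q hq
    have hq' := Finset.mem_Icc.mp hq
    have hlow : (n:ℤ) * (D1 + 1) ≤ n * q := mul_le_mul_of_nonneg_left hq'.1 (le_of_lt hn0)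
    have hhigh : (n:ℤ) * q ≤ n * D2 := mul_le_mul_of_nonneg_left hq'.2 (le_of_lt hn0)
    have hexp : (n:ℤ) * (D1 + 1) = n * D1 + n := by ring
    have hval := periodic_all hper q r
    refine ⟨hk1, hk2, ?_, ?_⟩
    · show k < r + (n:ℤ) * q
      linarith
    · show ω (r + (n:ℤ) * q) < ω k
      rw [hval]
      linarith
  have hinjφ : Set.InjOn φ ↑(Finset.Icc (D1 + 1) D2) := by
    intro a _ b _ hab
    have h1 : r + (n:ℤ) * a = r + n * b := (Prod.ext_iff.mp hab).2
    have h2 : (n:ℤ) * a = n * b := by linarith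
    exact mul_left_cancel₀ (by omega : (n:ℤ) ≠ 0) h2
  have hcard1 : ((Finset.Icc (D1 + 1) D2).image φ).card = (Finset.Icc (D1 + 1) D2).card :=
    Finset.card_image_of_injOn (fun a ha b hb h => hinjφ ha hb h)
  have hcard2 : (L:ℤ) < D2 - D1 - 1 := by
    have hexp : (n:ℤ) * (D2 - D1 - 1) = n * D2 - n * D1 - n := by ring
    have h5 : (n:ℤ) * (L:ℤ) < n * (D2 - D1 - 1) := by
      rw [hexp]
      nlinarith
    exact lt_of_mul_lt_mul_left h5 (le_of_lt hn0)
  have hcard3 : L + 1 ≤ ((Finset.Icc (D1 + 1) D2).image φ).card := by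
    rw [hcard1, Int.card_Icc]
    omega
  have hle : ((Finset.Icc (D1 + 1) D2).image φ).card ≤ affineLength n ω := by
    have hsub : ↑((Finset.Icc (D1 + 1) D2).image φ) ⊆ S := by
      intro y hy
      simp only [Finset.coe_image, Set.mem_image, Finset.mem_coe] at hy
      obtain ⟨q, hq, rfl⟩ := hy
      exact himg q hq
    calc ((Finset.Icc (D1 + 1) D2).image φ).card
        = (↑((Finset.Icc (D1 + 1) D2).image φ) : Set (ℤ × ℤ)).ncard :=
          (Set.ncard_coe_finset _).symm
      _ ≤ S.ncard := Set.ncard_le_ncard hsub hfin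
      _ = affineLength n ω := rfl
  omega

lemma contains_of_inversion {m : ℕ} (hn : 1 ≤ n) (p : Equiv.Perm (Fin m))
    (h321 : ∀ a b c : Fin m, a < b → b < c → p c < p b → p b < p a → False)
    (hinj : Function.Injective ω) (hper : ∀ i : ℤ, ω (i + n) = ω i + n)
    (i j : ℤ) (hij : i < j) (hjn : j < i + n)
    (hd : (n:ℤ) * 2^m + 1 ≤ ω i - ω j) :
    ContainsPattern ω p := by
  classical
  rcases Nat.eq_zero_or_pos m with hm | hm
  · subst hm
    refine ⟨fun t => 0, ?_, ?_⟩
    · intro a b _; exact a.elim0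
    · intro a; exact a.elim0
  · have hn0 : (0:ℤ) < n := by exact_mod_cast hn
    have hpow : (0:ℤ) < 2^m := pow_pos (by norm_num) m
    set d : ℤ := ω i - ω j with hdd
    have hd1 : 1 ≤ d := by nlinarith
    set c : ℤ := (d - 1) / (n:ℤ) with hcc
    have hmod := Int.mul_ediv_add_emod (d-1) (n:ℤ)
    have hm0 := Int.emod_nonneg (d-1) (by omega : (n:ℤ) ≠ 0)
    have hm1 := Int.emod_lt_of_pos (d-1) hn0
    have hc1 : (n:ℤ) * c ≤ d - 1 := by linarith
    have hc2 : d ≤ (n:ℤ) * (c+1) := by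
      have hx : (n:ℤ)*(c+1) = n*c + n := by ring
      linarith
    have hcm : (2:ℤ)^m ≤ c := by
      by_contra hcon
      push_neg at hcon
      have h1 : c + 1 ≤ 2^m := hcon
      have h2 : (n:ℤ)*(c+1) ≤ n * 2^m := mul_le_mul_of_nonneg_left h1 (le_of_lt hn0)
      linarith
    obtain ⟨col, hmono, hP2, hP3⟩ := core p hm h321 c hcm
    set f : Fin m → ℤ := fun t => if Ap p t then i + (n:ℤ) * col t else j + (n:ℤ) * col t
      with hf
    have hfval : ∀ t, ω (f t) = (if Ap p t then ω i else ω j) + (n:ℤ) * col t := by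
      intro t
      by_cases hA : Ap p t
      · rw [hf]; dsimp only; rw [if_pos hA, if_pos hA]; exact periodic_all hper (col t) i
      · rw [hf]; dsimp only; rw [if_neg hA, if_neg hA]; exact periodic_all hper (col t) j
    have hfmono : StrictMono f := by
      intro a b hab
      have hcab := hmono hab
      have hmul : (n:ℤ) * col a < n * col b := mul_lt_mul_of_pos_left hcab hn0
      rw [hf]; dsimp only
      by_cases hA : Ap p a
      · rw [if_pos hA]
        by_cases hB : Ap p b
        · rw [if_pos hB]; linarith
        · rw [if_neg hB]; linarith
      · rw [if_neg hA]
        by_cases hB : Ap p b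
        · rw [if_pos hB]
          have h1 : col a + 1 ≤ col b := Int.add_one_le_iff.mpr hcab
          have h2 : (n:ℤ) * (col a + 1) ≤ n * col b :=
            mul_le_mul_of_nonneg_left h1 (le_of_lt hn0)
          have h3 : (n:ℤ)*(col a + 1) = n*col a + n := by ring
          linarith
        · rw [if_neg hB]; linarith
    have hfinj := hfmono.injective
    have hωf : ∀ a b : Fin m, a ≠ b → ω (f a) ≠ ω (f b) :=
      fun a b hne h => hne (hfinj (hinj h))
    have key : ∀ a b : Fin m, a < b → (p a < p b ↔ ω (f a) < ω (f b)) := by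
      intro a b hab
      have hcab := hmono hab
      have hane : a ≠ b := ne_of_lt hab
      by_cases hA : Ap p a
      · by_cases hB : Ap p b
        · refine iff_of_true (hB a hab) ?_
          rw [hfval a, hfval b, if_pos hA, if_pos hB]
          have := mul_lt_mul_of_pos_left hcab hn0
          linarith
        · by_cases hp : p a < p b
          · refine iff_of_true hp ?_
            have h3 := hP3 a b hab hp hA hB
            have h4 : (n:ℤ) * (col a + c + 1) ≤ n * col b :=
              mul_le_mul_of_nonneg_left h3 (le_of_lt hn0)
            have h5 : (n:ℤ)*(col a + c + 1) = n*col a + n*c + n := by ring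
            have h7 := hωf a b hane
            rw [hfval a, hfval b, if_pos hA, if_neg hB] at h7 ⊢
            have h6 : ω i + (n:ℤ)*col a ≤ ω j + n*col b := by linarith
            exact lt_of_le_of_ne h6 h7
          · have hp' : p b < p a :=
              lt_of_le_of_ne (not_lt.mp hp) (fun h => hane (p.injective h.symm))
            refine iff_of_false hp ?_
            have h2 := hP2 a b hab hp'
            have h4 : (n:ℤ) * col b ≤ n * (col a + c) :=
              mul_le_mul_of_nonneg_left h2 (le_of_lt hn0)
            have h5 : (n:ℤ)*(col a + c) = n * col a + n * c := by ring
            rw [hfval a, hfval b, if_pos hA, if_neg hB]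
            intro hcon
            linarith
      · by_cases hB : Ap p b
        · refine iff_of_true (hB a hab) ?_
          rw [hfval a, hfval b, if_neg hA, if_pos hB]
          have := mul_lt_mul_of_pos_left hcab hn0
          linarith
        · have hpab : p a < p b := by
            by_contra hcon
            have hp' : p b < p a :=
              lt_of_le_of_ne (not_lt.mp hcon) (fun h => hane (p.injective h.symm))
            have hA' : ∃ s, s < a ∧ ¬ (p s < p a) := by
              by_contra hAll
              push_neg at hAll
              exact hA hAll
            obtain ⟨w, hw1, hw2⟩ := hA'
            have hw3 : p a < p w :=
              lt_of_le_of_ne (not_lt.mp hw2) (fun h => (ne_of_lt hw1) (p.injective h.symm))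
            exact h321 w a b hw1 hab hp' hw3
          refine iff_of_true hpab ?_
          rw [hfval a, hfval b, if_neg hA, if_neg hB]
          have := mul_lt_mul_of_pos_left hcab hn0
          linarith
    refine ⟨f, hfmono, ?_⟩
    intro a b
    rcases lt_trichotomy a b with h | h | h
    · exact key a b h
    · subst h; exact iff_of_false (lt_irrefl _) (lt_irrefl _)
    · have hk := key b a h
      have h1 : p a ≠ p b := fun hh => (ne_of_gt h) (p.injective hh)
      have h2 : ω (f a) ≠ ω (f b) := hωf a b (ne_of_gt h)
      constructor
      · intro hp
        have hnlt : ¬ (ω (f b) < ω (f a)) := fun hh => absurd (hk.mpr hh) (asymm hp)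
        exact lt_of_le_of_ne (not_lt.mp hnlt) h2
      · intro hv
        have hnlt : ¬ (p b < p a) := fun hh => absurd (hk.mp hh) (asymm hv)
        exact lt_of_le_of_ne (not_lt.mp hnlt) h1

lemma finite_small (hn : 1 ≤ n) (L : ℕ) :
    {ω : ℤ → ℤ | Function.Bijective ω ∧
        (∀ i : ℤ, ω (i + n) = ω i + n) ∧
        (∑ i ∈ Finset.Icc (1 : ℤ) (n : ℤ), ω i = ((n + 1).choose 2 : ℤ)) ∧
        affineLength n ω ≤ L}.Finite := by
  classical
  set B0 : ℤ := (n:ℤ) * L + 3 * n + 3 with hB0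
  set T := {ω : ℤ → ℤ | Function.Bijective ω ∧
        (∀ i : ℤ, ω (i + n) = ω i + n) ∧
        (∑ i ∈ Finset.Icc (1 : ℤ) (n : ℤ), ω i = ((n + 1).choose 2 : ℤ)) ∧
        affineLength n ω ≤ L} with hT
  have hbound : ∀ ω ∈ T, ∀ r : ℤ, 1 ≤ r → r ≤ n →
      r - B0 ≤ ω r ∧ ω r ≤ r + B0 := by
    intro ω hω r hr1 hr2
    obtain ⟨hbij, hper, hsum, hlen⟩ := hω
    obtain ⟨k, hk1, hk2, hk3⟩ := exists_le hn hsum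
    obtain ⟨k', hk1', hk2', hk3'⟩ := exists_ge hn hsum
    constructor
    · have := bound_down hn hper L hlen k' hk1' hk2' hk3' r hr1 hr2
      omega
    · have := bound_up hn hper L hlen k hk1 hk2 hk3 r hr1 hr2
      omega
  set G : (ℤ → ℤ) → (Fin n → ℤ) := fun ω t => ω ((t:ℤ) + 1) with hG
  have hGinj : Set.InjOn G T := by
    intro ω₁ h₁ ω₂ h₂ hEq
    funext z
    obtain ⟨q, r, hr1, hr2, rfl⟩ := decomp hn z
    have e1 := periodic_all h₁.2.1 q r
    have e2 := periodic_all h₂.2.1 q r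
    have hrval : ω₁ r = ω₂ r := by
      have hlt : (r-1).toNat < n := by omega
      have hcast : (((⟨(r-1).toNat, hlt⟩ : Fin n) : ℤ) + 1) = r := by
        simp only [Fin.val_mk]
        omega
      have := congrFun hEq ⟨(r-1).toNat, hlt⟩
      rw [hG] at this
      dsimp only at this
      rw [hcast] at this
      exact this
    rw [e1, e2, hrval]
  apply Set.Finite.of_finite_image ?_ hGinj
  apply Set.Finite.subset
    (Set.Finite.pi (fun t : Fin n => Set.finite_Icc ((t:ℤ) + 1 - B0) ((t:ℤ) + 1 + B0)))
  rintro _ ⟨ω, hω, rfl⟩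
  rw [Set.mem_pi]
  intro t _
  have htn : ((t:ℤ) + 1) ≤ n := by
    have := t.isLt
    omega
  have ht1 : (1:ℤ) ≤ (t:ℤ) + 1 := by
    have := t.val.zero_le
    omega
  have := hbound ω hω ((t:ℤ) + 1) ht1 htn
  show ω ((t:ℤ) + 1) ∈ Set.Icc ((t:ℤ) + 1 - B0) ((t:ℤ) + 1 + B0)
  exact Set.mem_Icc.mpr ⟨by omega, by omega⟩

end Harness

end AffProof

theorem avoids_321_pattern_finitely_many (n m : ℕ) (hn : 2 ≤ n)
    (p : Equiv.Perm (Fin m))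
    (h321 : ¬ ∃ i j k : Fin m, i < j ∧ j < k ∧ p k < p j ∧ p j < p i) :
    ∃ L : ℕ,
      (∀ ω : ℤ → ℤ, Function.Bijective ω →
        (∀ i : ℤ, ω (i + n) = ω i + n) →
        (∑ i ∈ Finset.Icc (1 : ℤ) (n : ℤ), ω i = ((n + 1).choose 2 : ℤ)) →
        L < affineLength n ω → ContainsPattern ω p) ∧
      {ω : ℤ → ℤ | Function.Bijective ω ∧
        (∀ i : ℤ, ω (i + n) = ω i + n) ∧
        (∑ i ∈ Finset.Icc (1 : ℤ) (n : ℤ), ω i = ((n + 1).choose 2 : ℤ)) ∧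
        ¬ ContainsPattern ω p}.Finite := by
  classical
  have h321' : ∀ a b c : Fin m, a < b → b < c → p c < p b → p b < p a → False := by
    intro a b c h1 h2 h3 h4
    exact h321 ⟨a, b, c, h1, h2, h3, h4⟩
  have hn1 : 1 ≤ n := by omega
  have main1 : ∀ ω : ℤ → ℤ, Function.Bijective ω →
      (∀ i : ℤ, ω (i + n) = ω i + n) →
      n * (n * 2^m) < affineLength n ω → ContainsPattern ω p := by
    intro ω hbij hper hlen
    have hex : ∃ i j : ℤ, 1 ≤ i ∧ i ≤ (n:ℤ) ∧ i < j ∧ ω j < ω i ∧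
        ((n * 2^m : ℕ):ℤ) + 1 ≤ ω i - ω j := by
      by_contra hcon
      push_neg at hcon
      have hall : ∀ i j : ℤ, 1 ≤ i → i ≤ n → i < j → ω j < ω i →
          ω i - ω j ≤ ((n * 2^m : ℕ):ℤ) := by
        intro i j h1 h2 h3 h4
        have := hcon i j h1 h2 h3 h4
        omega
      have := AffProof.length_le_of_small hn1 hbij.injective (n * 2^m) hall
      omega
    obtain ⟨i, j, h1, h2, h3, h4, h5⟩ := hex
    obtain ⟨j', hj1, hj2, hj3, hj4⟩ :=
      AffProof.reduce hn1 hper (((n * 2^m : ℕ):ℤ) + 1) (j - i).toNat i j (le_refl _) h3 h4 h5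
    refine AffProof.contains_of_inversion hn1 p h321' hbij.injective hper i j' hj1 hj2 ?_
    have hcast : ((n * 2^m : ℕ):ℤ) = (n:ℤ) * 2^m := by push_cast; ring
    rw [hcast] at hj4
    linarith
  refine ⟨n * (n * 2^m), fun ω hb hp _ hl => main1 ω hb hp hl, ?_⟩
  have hsub : {ω : ℤ → ℤ | Function.Bijective ω ∧
        (∀ i : ℤ, ω (i + n) = ω i + n) ∧
        (∑ i ∈ Finset.Icc (1 : ℤ) (n : ℤ), ω i = ((n + 1).choose 2 : ℤ)) ∧
        ¬ ContainsPattern ω p} ⊆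
      {ω : ℤ → ℤ | Function.Bijective ω ∧
        (∀ i : ℤ, ω (i + n) = ω i + n) ∧
        (∑ i ∈ Finset.Icc (1 : ℤ) (n : ℤ), ω i = ((n + 1).choose 2 : ℤ)) ∧
        affineLength n ω ≤ n * (n * 2^m)} := by
    rintro ω ⟨hb, hp, hs, hnc⟩
    refine ⟨hb, hp, hs, ?_⟩
    by_contra hcon
    push_neg at hcon
    exact hnc (main1 ω hb hp hcon)
  exact (AffProof.finite_small hn1 (n * (n * 2^m))).subset hsub
end

section
/- For each k ≥ 1, the function ω^(k): ℤ → ℤ determined by the base window [1−k, 2−k, …, n−1−k, n+k(n−1)] (extended by ω(i+n) = ω(i)+n) is an element of S̃_n, and ω^(k) avoids the pattern 321. -/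
lemma spiral_not_dvd (n : ℕ) (hn : 2 ≤ n) (b : ℤ) (h1 : 1 ≤ b)
    (h2 : b ≤ (n : ℤ) - 1) : ¬ (n : ℤ) ∣ b := by
  rintro ⟨m, rfl⟩
  have hn' : (2 : ℤ) ≤ n := by exact_mod_cast hn
  rcases le_or_gt m 0 with h | h
  · nlinarith
  · nlinarith

lemma spiral_sum_Icc (m : ℕ) :
    ∑ i ∈ Finset.Icc (1 : ℤ) (m : ℤ), i = ∑ i ∈ Finset.range (m + 1), (i : ℤ) := by
  induction m with
  | zero => simp
  | succ m ih =>
    have hc : ((m + 1 : ℕ) : ℤ) = (m : ℤ) + 1 := by push_cast; ring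
    have hins : Finset.Icc (1 : ℤ) ((m : ℤ) + 1) = insert ((m : ℤ) + 1) (Finset.Icc 1 (m : ℤ)) := by
      ext x; simp only [Finset.mem_Icc, Finset.mem_insert]; omega
    rw [hc, hins, Finset.sum_insert (by simp [Finset.mem_Icc])]
    rw [ih]
    conv_rhs => rw [Finset.sum_range_succ]
    push_cast; ring

theorem spiral_element_avoids_321 (n k : ℕ) (hn : 2 ≤ n) (hk : 1 ≤ k) :
    ∃ ω : ℤ → ℤ,
      (∀ i : ℤ, ω (i + n) = ω i + n) ∧
      (∀ i : ℤ, 1 ≤ i → i ≤ (n : ℤ) - 1 → ω i = i - k) ∧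
      ω n = (n : ℤ) + k * ((n : ℤ) - 1) ∧
      Function.Bijective ω ∧
      (∑ i ∈ Finset.Icc (1 : ℤ) (n : ℤ), ω i = ((n + 1).choose 2 : ℤ)) ∧
      ¬ ∃ i₁ i₂ i₃ : ℤ, i₁ < i₂ ∧ i₂ < i₃ ∧ ω i₃ < ω i₂ ∧ ω i₂ < ω i₁ := by
  set ω : ℤ → ℤ := fun i => i - k + (if (n : ℤ) ∣ i then (k : ℤ) * n else 0) with hω
  have hn' : (2 : ℤ) ≤ n := by exact_mod_cast hn
  have hk' : (1 : ℤ) ≤ k := by exact_mod_cast hk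
  have hge : ∀ i : ℤ, i - k ≤ ω i := by
    intro i
    simp only [hω]
    split <;> nlinarith
  have hdvd_val : ∀ i : ℤ, (n : ℤ) ∣ i → ω i = i - k + k * n := by
    intro i h; simp [hω, h]
  have hndvd_val : ∀ i : ℤ, ¬ (n : ℤ) ∣ i → ω i = i - k := by
    intro i h; simp [hω, h]
  refine ⟨ω, ?_, ?_, ?_, ?_, ?_, ?_⟩
  · intro i
    have h : (n : ℤ) ∣ (i + n) ↔ (n : ℤ) ∣ i := by
      constructor
      · intro h; have := h.sub (dvd_refl (n : ℤ)); simpa using this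
      · intro h; exact h.add (dvd_refl _)
    simp only [hω, h]; ring_nf
  · intro i h1 h2
    rw [hndvd_val i (spiral_not_dvd n hn i h1 h2)]
  · rw [hdvd_val (n : ℤ) (dvd_refl _)]; ring
  · apply Function.bijective_iff_has_inverse.mpr
    refine ⟨fun j => j + k - (if (n : ℤ) ∣ (j + k) then (k : ℤ) * n else 0), ?_, ?_⟩
    · intro i
      by_cases hd : (n : ℤ) ∣ i
      · rw [hdvd_val i hd]
        beta_reduce
        have e : i - (k : ℤ) + k * n + k = i + k * n := by ring
        rw [e, if_pos (hd.add (dvd_mul_left _ _))]; ring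
      · rw [hndvd_val i hd]
        beta_reduce
        have e : i - (k : ℤ) + k = i := by ring
        rw [e, if_neg hd]; ring
    · intro j
      beta_reduce
      by_cases hd : (n : ℤ) ∣ (j + k)
      · have h2 : (n : ℤ) ∣ (j + k - k * n) := hd.sub (dvd_mul_left _ _)
        rw [if_pos hd, hdvd_val _ h2]; ring
      · rw [if_neg hd, sub_zero, hndvd_val _ hd]; ring
  · have hsplit : ∑ i ∈ Finset.Icc (1 : ℤ) (n : ℤ), ω i =
        ∑ i ∈ Finset.Icc (1 : ℤ) (n : ℤ), (i - k)
        + ∑ i ∈ Finset.Icc (1 : ℤ) (n : ℤ), (if (n : ℤ) ∣ i then (k : ℤ) * n else 0) := by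
      rw [← Finset.sum_add_distrib]
    have hone : ∑ i ∈ Finset.Icc (1 : ℤ) (n : ℤ), (if (n : ℤ) ∣ i then (k : ℤ) * n else 0)
        = k * n := by
      rw [Finset.sum_eq_single_of_mem (n : ℤ)]
      · simp
      · simp; omega
      · intro b hb hbn
        rw [Finset.mem_Icc] at hb
        have : b ≤ (n : ℤ) - 1 := by
          rcases lt_or_eq_of_le hb.2 with h | h
          · omega
          · exact absurd h hbn
        simp [spiral_not_dvd n hn b hb.1 this]
    have hcard : (Finset.Icc (1 : ℤ) (n : ℤ)).card = n := by
      rw [Int.card_Icc]; omega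
    rw [hsplit, hone, Finset.sum_sub_distrib, Finset.sum_const, hcard, spiral_sum_Icc]
    have hch : (n + 1).choose 2 = ∑ i ∈ Finset.range (n + 1), i := by
      rw [Finset.sum_range_id, Nat.choose_two_right]
    have : ((n + 1).choose 2 : ℤ) = ∑ i ∈ Finset.range (n + 1), (i : ℤ) := by
      rw [hch]; push_cast; rfl
    rw [this]; ring
  · rintro ⟨i₁, i₂, i₃, h12, h23, hw32, hw21⟩
    have key : ∀ a b : ℤ, a < b → ω b < ω a → (n : ℤ) ∣ a := by
      intro a b hab hw
      by_contra hd
      rw [hndvd_val a hd] at hw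
      have := hge b
      omega
    have d1 : (n : ℤ) ∣ i₁ := key i₁ i₂ h12 hw21
    have d2 : (n : ℤ) ∣ i₂ := key i₂ i₃ h23 hw32
    rw [hdvd_val i₁ d1, hdvd_val i₂ d2] at hw21
    omega
end

section
/- Let p ∈ S_m avoid 321 and be decomposable: there exists 1 ≤ j ≤ m−1 with {p₁,…,p_j} = {1,…,j}, giving q = p₁⋯p_j ∈ S_j and r viewed in S_{m−j}. If an affine permutation ω ∈ S̃_n contains both q and r, then ω contains p. -/
set_option maxRecDepth 4000


theorem decomposable_pattern_containment (n j l : ℕ) (hn : 2 ≤ n)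
    (hj : 1 ≤ j) (hl : 1 ≤ l)
    (p : Equiv.Perm (Fin (j + l))) (q : Equiv.Perm (Fin j)) (r : Equiv.Perm (Fin l))
    (h321 : ¬ ∃ a b c : Fin (j + l), a < b ∧ b < c ∧ p c < p b ∧ p b < p a)
    (hq : ∀ a : Fin j, (p (Fin.castAdd l a) : ℕ) = (q a : ℕ))
    (hr : ∀ b : Fin l, (p (Fin.natAdd j b) : ℕ) = j + (r b : ℕ))
    (ω : ℤ → ℤ) (hbij : Function.Bijective ω)
    (hshift : ∀ i : ℤ, ω (i + n) = ω i + n)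
    (hsum : ∑ i ∈ Finset.Icc (1 : ℤ) (n : ℤ), ω i = ((n + 1).choose 2 : ℤ))
    (hcq : ContainsPattern ω q) (hcr : ContainsPattern ω r) :
    ContainsPattern ω p := by
  obtain ⟨g, hg1, hg2⟩ := hcq
  obtain ⟨f, hf1, hf2⟩ := hcr
  have hjne : Nonempty (Fin j) := ⟨⟨0, hj⟩⟩
  have hlne : Nonempty (Fin l) := ⟨⟨0, hl⟩⟩
  obtain ⟨K, hK⟩ : ∃ K : ℤ, ∀ (a : Fin j) (b : Fin l),
      g a - f b ≤ K ∧ ω (g a) - ω (f b) ≤ K := by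
    have hs : (Finset.univ : Finset (Fin j × Fin l)).Nonempty := Finset.univ_nonempty
    refine ⟨Finset.univ.sup' hs
      (fun x => max (g x.1 - f x.2) (ω (g x.1) - ω (f x.2))), ?_⟩
    intro a b
    have h := Finset.le_sup'
      (fun x : Fin j × Fin l => max (g x.1 - f x.2) (ω (g x.1) - ω (f x.2)))
      (Finset.mem_univ (a, b))
    exact ⟨le_trans (le_max_left _ _) h, le_trans (le_max_right _ _) h⟩
  set N : ℕ := K.toNat + 1 with hN
  have hshiftN : ∀ i : ℤ, ω (i + (N : ℤ) * n) = ω i + (N : ℤ) * n := by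
    have key : ∀ (M : ℕ) (i : ℤ), ω (i + (M : ℤ) * n) = ω i + (M : ℤ) * n := by
      intro M
      induction M with
      | zero => simp
      | succ M ih =>
        intro i
        have h1 : i + ((M : ℤ) + 1) * n = (i + n) + (M : ℤ) * n := by ring
        push_cast
        rw [h1, ih (i + n), hshift]
        ring
    exact key N
  have hKN : K < (N : ℤ) * n := by
    have h1 : K < (N : ℤ) := by omega
    have h2 : (N : ℤ) ≤ (N : ℤ) * n := by
      nlinarith [Int.ofNat_nonneg N, (by exact_mod_cast hn : (2 : ℤ) ≤ (n : ℤ))]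
    linarith
  have hgf : ∀ (a : Fin j) (b : Fin l), g a < f b + (N : ℤ) * n := by
    intro a b
    have := (hK a b).1
    linarith
  have hωgf : ∀ (a : Fin j) (b : Fin l), ω (g a) < ω (f b + (N : ℤ) * n) := by
    intro a b
    rw [hshiftN]
    have := (hK a b).2
    linarith
  refine ⟨Fin.addCases (fun a => g a) (fun b => f b + (N : ℤ) * n), ?_, ?_⟩
  · intro x y hxy
    cases x using Fin.addCases with
    | left a =>
      cases y using Fin.addCases with
      | left a' =>
        simp only [Fin.addCases_left]
        refine hg1 ?_
        rw [Fin.lt_def] at hxy ⊢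
        simpa using hxy
      | right b =>
        simp only [Fin.addCases_left, Fin.addCases_right]
        exact hgf a b
    | right b =>
      cases y using Fin.addCases with
      | left a' =>
        exfalso
        have ha := a'.isLt
        rw [Fin.lt_def] at hxy
        simp at hxy
        omega
      | right b' =>
        simp only [Fin.addCases_right]
        have : f b < f b' := by
          refine hf1 ?_
          rw [Fin.lt_def] at hxy ⊢
          simpa using hxy
        linarith
  · intro x y
    cases x using Fin.addCases with
    | left a =>
      cases y using Fin.addCases with
      | left a' =>
        simp only [Fin.addCases_left]
        rw [← hg2, Fin.lt_def, Fin.lt_def, hq a, hq a']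
      | right b =>
        simp only [Fin.addCases_left, Fin.addCases_right]
        refine iff_of_true ?_ (hωgf a b)
        have h1 := (q a).isLt
        rw [Fin.lt_def, hq a, hr b]
        omega
    | right b =>
      cases y using Fin.addCases with
      | left a' =>
        simp only [Fin.addCases_left, Fin.addCases_right]
        refine iff_of_false ?_ (not_lt.mpr (le_of_lt (hωgf a' b)))
        have h1 := (q a').isLt
        rw [Fin.lt_def, hq a', hr b]
        omega
      | right b' =>
        simp only [Fin.addCases_right]
        rw [hshiftN, hshiftN, add_lt_add_iff_right, ← hf2, Fin.lt_def, Fin.lt_def, hr b, hr b']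
        omega
end

section
/- For any ω ∈ S̃_n, the Coxeter length satisfies ℓ(ω) = inv(ω₁,…,ω_n) + ∑_{1 ≤ i < j ≤ n} ⌊|ω_j − ω_i| / n⌋, where inv counts the pairs i < j in {1,…,n} with ω_i > ω_j. -/
private lemma ediv_pred (n d : ℤ) (hn : 0 < n) (hnd : ¬ n ∣ d) : (d - 1) / n = d / n := by
  refine le_antisymm (Int.ediv_le_ediv hn (by omega)) ?_
  rw [Int.le_ediv_iff_mul_le hn]
  have h1 := Int.ediv_mul_le d hn.ne'
  have h2 : d / n * n ≠ d := fun h => hnd ⟨d / n, by linarith⟩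
  omega

private lemma res_unique (n r1 r2 k1 k2 : ℤ) (hn : 0 < n) (h1 : 1 ≤ r1) (h2 : r1 ≤ n)
    (h3 : 1 ≤ r2) (h4 : r2 ≤ n) (he : r1 + k1 * n = r2 + k2 * n) : r1 = r2 ∧ k1 = k2 := by
  have key : (k2 - k1) * n = r1 - r2 := by rw [sub_mul]; linarith
  rcases lt_trichotomy k1 k2 with h | h | h
  · have hge : n ≤ (k2 - k1) * n := le_mul_of_one_le_left hn.le (by omega)
    linarith
  · constructor
    · rw [h] at he; linarith
    · exact h
  · have hge : n ≤ (k1 - k2) * n := le_mul_of_one_le_left hn.le (by omega)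
    have : (k1 - k2) * n = r2 - r1 := by rw [sub_mul]; linarith
    linarith

theorem affine_length_formula (n : ℕ) (hn : 2 ≤ n) (ω : ℤ → ℤ)
    (hbij : Function.Bijective ω)
    (hshift : ∀ i : ℤ, ω (i + n) = ω i + n)
    (hsum : ∑ i ∈ Finset.Icc (1 : ℤ) (n : ℤ), ω i = ((n + 1).choose 2 : ℤ)) :
    (affineLength n ω : ℤ) =
      (((Finset.Icc (1 : ℤ) (n : ℤ) ×ˢ Finset.Icc (1 : ℤ) (n : ℤ)).filter
        (fun q => q.1 < q.2 ∧ ω q.2 < ω q.1)).card : ℤ) +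
      ∑ q ∈ (Finset.Icc (1 : ℤ) (n : ℤ) ×ˢ Finset.Icc (1 : ℤ) (n : ℤ)).filter
        (fun q => q.1 < q.2), |ω q.2 - ω q.1| / (n : ℤ) := by
  have hn0 : (0:ℤ) < (n:ℤ) := by exact_mod_cast Nat.lt_of_lt_of_le Nat.zero_lt_two hn
  -- extended shift
  have hshift' : ∀ (k : ℤ) (i : ℤ), ω (i + k * n) = ω i + k * n := by
    intro k
    induction k using Int.induction_on with
    | zero => simp
    | succ k ih =>
        intro i
        have h1 : i + ((k : ℤ) + 1) * n = (i + k * n) + n := by ring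
        rw [h1, hshift, ih]; ring
    | pred k ih =>
        intro i
        have h1 : (i + (-(k:ℤ) - 1) * n) + n = i + (-(k:ℤ)) * n := by ring
        have := hshift (i + (-(k:ℤ) - 1) * n)
        rw [h1, ih] at this
        linarith
  have hinj := hbij.injective
  -- non-divisibility
  have hmod : ∀ i r : ℤ, 1 ≤ i → i ≤ n → 1 ≤ r → r ≤ n → i ≠ r → ¬ (n:ℤ) ∣ (ω i - ω r) := by
    rintro i r h1 h2 h3 h4 hne ⟨k, hk⟩
    have he : ω i = ω (r + k * n) := by rw [hshift' k r]; linarith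
    have hi : i = r + k * n := hinj he
    rcases lt_trichotomy k 0 with h | h | h
    · have : k * n ≤ (-1) * n := mul_le_mul_of_nonneg_right (by omega) hn0.le
      linarith
    · apply hne; rw [hi, h]; ring
    · have : n ≤ k * n := le_mul_of_one_le_left hn0.le (by omega)
      linarith
  set B := Finset.Icc (1:ℤ) (n:ℤ) with hB
  set piece : ℤ × ℤ → Finset (ℤ × ℤ) := fun q =>
    (Finset.Icc (if q.1 < q.2 then 0 else 1) ((ω q.1 - ω q.2 - 1) / n)).image
      (fun k => (q.1, q.2 + k * n)) with hpiece
  set F : Finset (ℤ × ℤ) := (B ×ˢ B).biUnion piece with hF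
  -- the defining set equals F
  have hSF : {q : ℤ × ℤ | 1 ≤ q.1 ∧ q.1 ≤ (n : ℤ) ∧ q.1 < q.2 ∧ ω q.2 < ω q.1} = ↑F := by
    ext ⟨i, j⟩
    simp only [Set.mem_setOf_eq, Finset.coe_biUnion, Set.mem_iUnion, Finset.mem_coe,
      Finset.mem_biUnion, hF, hpiece, Finset.mem_image, Finset.mem_product, Finset.mem_Icc, hB,
      Finset.mem_Icc]
    constructor
    · rintro ⟨hi1, hi2, hij, hw⟩
      set r : ℤ := (j - 1) % n + 1 with hr
      set k : ℤ := (j - 1) / n with hk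
      have hjd : j = r + k * n := by
        have h := Int.mul_ediv_add_emod (j - 1) (n:ℤ)
        rw [hr, hk]
        linarith [mul_comm ((j-1) / (n:ℤ)) (n:ℤ)]
      have hr1 : 1 ≤ r := by
        rw [hr]; linarith [Int.emod_nonneg (j - 1) hn0.ne']
      have hr2 : r ≤ n := by
        rw [hr]; linarith [Int.emod_lt_of_pos (j - 1) hn0]
      have hwj : ω j = ω r + k * n := by rw [hjd, hshift']
      refine ⟨(i, r), ⟨⟨hi1, hi2⟩, hr1, hr2⟩, k, ⟨?_, ?_⟩, ?_⟩
      · -- lower bound on k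
        split_ifs with hir
        · by_contra hc
          push_neg at hc
          have : k * n ≤ (-1) * n := mul_le_mul_of_nonneg_right (by omega) hn0.le
          linarith
        · push_neg at hir
          by_contra hc
          push_neg at hc
          have : k * n ≤ 0 := mul_nonpos_iff.mpr (Or.inr ⟨by omega, hn0.le⟩)
          simp only at hir
          linarith
      · -- upper bound on k
        show k ≤ (ω i - ω r - 1) / n
        rw [Int.le_ediv_iff_mul_le hn0]
        have h1 : ω j + 1 ≤ ω i := Int.add_one_le_iff.mpr hw
        linarith
      · show (i, r + k * n) = (i, j)
        rw [← hjd]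
    · rintro ⟨⟨i', r⟩, ⟨⟨hi1, hi2⟩, hr1, hr2⟩, k, ⟨hk1, hk2⟩, heq⟩
      simp only [Prod.mk.injEq] at heq
      obtain ⟨hii, hjj⟩ := heq
      simp only at hi1 hi2 hr1 hr2 hk1 hk2
      have hwj : ω j = ω r + k * n := by rw [← hjj, hshift']
      have hkn : k * n ≤ ω i' - ω r - 1 := (Int.le_ediv_iff_mul_le hn0).mp hk2
      rw [← hii]
      refine ⟨hi1, hi2, ?_, by linarith⟩
      split_ifs at hk1 with hir
      · have : 0 ≤ k * n := mul_nonneg hk1 hn0.le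
        linarith
      · push_neg at hir
        have : (n:ℤ) ≤ k * n := le_mul_of_one_le_left hn0.le hk1
        linarith
  have hcount : (affineLength n ω : ℤ) = (F.card : ℤ) := by
    rw [affineLength, hSF, Set.ncard_coe_finset]
  rw [hcount]
  -- disjointness and card per piece
  have hdisj : ∀ q1 ∈ B ×ˢ B, ∀ q2 ∈ B ×ˢ B, q1 ≠ q2 → Disjoint (piece q1) (piece q2) := by
    rintro ⟨i1, r1⟩ hq1 ⟨i2, r2⟩ hq2 hne
    simp only [Finset.mem_product, hB, Finset.mem_Icc] at hq1 hq2
    rw [Finset.disjoint_left]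
    rintro ⟨a, b⟩ h1 h2
    simp only [hpiece, Finset.mem_image, Finset.mem_Icc, Prod.mk.injEq] at h1 h2
    obtain ⟨k1, hk1, he1a, he1b⟩ := h1
    obtain ⟨k2, hk2, he2a, he2b⟩ := h2
    apply hne
    have h12 : i1 = i2 := by rw [he1a, he2a]
    have hr : r1 + k1 * n = r2 + k2 * n := by rw [he1b, he2b]
    have hrr := res_unique (n:ℤ) r1 r2 k1 k2 hn0 hq1.2.1 hq1.2.2 hq2.2.1 hq2.2.2 hr
    simp [h12, hrr.1]
  have hcardF : (F.card : ℤ) =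
      ∑ q ∈ B ×ˢ B, (((ω q.1 - ω q.2 - 1) / n + 1 - (if q.1 < q.2 then 0 else 1)).toNat : ℤ) := by
    rw [hF, Finset.card_biUnion hdisj]
    push_cast
    refine Finset.sum_congr rfl fun q hq => ?_
    simp only [hpiece]
    rw [Finset.card_image_of_injective _ (fun k1 k2 h => by
      simp only [Prod.mk.injEq] at h
      have h2 := h.2
      exact mul_right_cancel₀ hn0.ne' (by linarith)), Int.card_Icc]
  rw [hcardF]
  -- split sum
  set g : ℤ × ℤ → ℤ := fun q =>
    (((ω q.1 - ω q.2 - 1) / n + 1 - (if q.1 < q.2 then 0 else 1)).toNat : ℤ) with hg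
  have hsplit : ∑ q ∈ B ×ˢ B, g q =
      ∑ q ∈ (B ×ˢ B).filter (fun q => q.1 < q.2), (g q + g q.swap) := by
    rw [Finset.sum_add_distrib]
    have h2 : ∑ q ∈ (B ×ˢ B).filter (fun q => q.1 < q.2), g q.swap =
        ∑ q ∈ (B ×ˢ B).filter (fun q => q.2 < q.1), g q := by
      apply Finset.sum_nbij' (fun q : ℤ × ℤ => q.swap) (fun q : ℤ × ℤ => q.swap)
      · rintro ⟨a, b⟩ hq
        simp only [Finset.mem_filter, Finset.mem_product] at hq ⊢
        exact ⟨⟨hq.1.2, hq.1.1⟩, hq.2⟩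
      · rintro ⟨a, b⟩ hq
        simp only [Finset.mem_filter, Finset.mem_product] at hq ⊢
        exact ⟨⟨hq.1.2, hq.1.1⟩, hq.2⟩
      · intro q hq; simp
      · intro q hq; simp
      · intro q hq; rfl
    rw [h2]
    have h3 : ∑ q ∈ (B ×ˢ B).filter (fun q => ¬ q.1 < q.2), g q =
        ∑ q ∈ (B ×ˢ B).filter (fun q => q.2 < q.1), g q := by
      rw [← Finset.sum_filter_add_sum_filter_not ((B ×ˢ B).filter (fun q => ¬ q.1 < q.2))
        (fun q => q.2 < q.1)]
      have hz : ∑ q ∈ (B ×ˢ B).filter (fun q => ¬ q.1 < q.2 ∧ ¬ q.2 < q.1), g q = 0 := by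
        apply Finset.sum_eq_zero
        rintro ⟨a, b⟩ hq
        simp only [Finset.mem_filter] at hq
        have hab : a = b := by
          have := hq.2
          omega
        subst hab
        simp only [hg, lt_self_iff_false, if_false, sub_self]
        have h0 : ((0:ℤ) - 1) / n < 0 := Int.ediv_neg_of_neg_of_pos (by norm_num) hn0
        have h1 : ((0:ℤ) - 1) / n + 1 - 1 ≤ 0 := by linarith
        rw [Int.toNat_of_nonpos h1]
        simp
      rw [Finset.filter_filter, Finset.filter_filter, hz, add_zero]
      apply Finset.sum_congr _ (fun _ _ => rfl)
      apply Finset.filter_congr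
      intro q hq
      simp only [and_iff_right_iff_imp]
      omega
    rw [← h3, Finset.sum_filter_add_sum_filter_not]
  rw [hsplit]
  -- RHS as a sum over the same filter
  have hRHS1 : (((B ×ˢ B).filter (fun q => q.1 < q.2 ∧ ω q.2 < ω q.1)).card : ℤ) =
      ∑ q ∈ (B ×ˢ B).filter (fun q => q.1 < q.2), (if ω q.2 < ω q.1 then (1:ℤ) else 0) := by
    rw [Finset.sum_boole, ← Finset.filter_filter]
  rw [hRHS1, ← Finset.sum_add_distrib]
  apply Finset.sum_congr rfl
  rintro ⟨i, r⟩ hq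
  simp only [Finset.mem_filter, Finset.mem_product, hB, Finset.mem_Icc] at hq
  obtain ⟨⟨⟨hi1, hi2⟩, hr1, hr2⟩, hir⟩ := hq
  have hir' : i < r := hir
  have hnd : ¬ (n:ℤ) ∣ (ω i - ω r) := hmod i r hi1 hi2 hr1 hr2 (by omega)
  simp only [hg, Prod.swap_prod_mk, if_pos hir, if_neg (by omega : ¬ r < i)]
  -- now pure arithmetic on d = ω i - ω r
  set d : ℤ := ω i - ω r with hd
  have hde : ω r - ω i = -d := by rw [hd]; ring
  rcases lt_trichotomy d 0 with hdlt | hdeq | hdgt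
  · -- d < 0 : ω i < ω r, no inversion
    have h1 : (d - 1) / n + 1 - 0 ≤ 0 := by
      have := Int.ediv_neg_of_neg_of_pos (by omega : d - 1 < 0) hn0
      linarith
    rw [Int.toNat_of_nonpos h1]
    have h2 : (-d - 1) / n = (-d) / n :=
      ediv_pred n (-d) hn0 (fun ⟨c, hc⟩ => hnd ⟨-c, by linarith⟩)
    have h3 : 0 ≤ (ω r - ω i - 1) / n + 1 - 1 := by
      rw [hde, h2]
      have := Int.ediv_nonneg (by omega : (0:ℤ) ≤ -d) hn0.le
      linarith
    rw [Int.toNat_of_nonneg h3]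
    have hw : ¬ ω r < ω i := by omega
    rw [if_neg hw]
    have habs : |ω r - ω i| = -d := by rw [hde]; exact abs_of_pos (by omega)
    rw [habs, hde, h2]
    push_cast
    ring
  · exact absurd hdeq (fun h => hnd (h ▸ dvd_zero _))
  · -- d > 0 : inversion
    have h2 : (d - 1) / n = d / n := ediv_pred n d hn0 hnd
    have h3 : 0 ≤ (d - 1) / n + 1 - 0 := by
      rw [h2]
      have := Int.ediv_nonneg (by omega : (0:ℤ) ≤ d) hn0.le
      linarith
    rw [Int.toNat_of_nonneg h3]
    have h4 : (ω r - ω i - 1) / n + 1 - 1 ≤ 0 := by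
      rw [hde]
      have := Int.ediv_neg_of_neg_of_pos (by omega : -d - 1 < 0) hn0
      linarith
    rw [Int.toNat_of_nonpos h4]
    have hw : ω r < ω i := by omega
    rw [if_pos hw]
    have habs : |ω r - ω i| = d := by rw [hde]; rw [abs_of_neg (by omega : -d < 0)]; ring
    rw [habs, h2]
    push_cast
    ring
end
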